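/- arXiv:2008.05069 — 3 statements merged into one kernel-verified Lean document; each statement's English description precedes it below -/
import Mathlib

section
/- For every finite simple graph G there exist positive integers q and h such that every interfered K^1_{q,h} contains G as a vertex-minor. -/
open SimpleGraph

/-! ### Basic operations: local complementation, pivoting, vertex-minors -/

/-- Local complementation at a vertex `v`: the adjacency between each pair of
neighbours of `v` is toggled. -/
def localComp {V : Type*} (G : SimpleGraph V) (v : V) : SimpleGraph V where
  Adj a b := (G.Adj a b ∧ ¬(G.Adj v a ∧ G.Adj v b)) ∨
    (a ≠ b ∧ ¬ G.Adj a b ∧ G.Adj v a ∧ G.Adj v b)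
  symm := by
    constructor
    rintro a b (⟨h1, h2⟩ | ⟨h1, h2, h3, h4⟩)
    · exact Or.inl ⟨h1.symm, fun hc => h2 ⟨hc.2, hc.1⟩⟩
    · exact Or.inr ⟨h1.symm, fun hc => h2 hc.symm, h4, h3⟩
  loopless := by
    constructor
    rintro a (⟨h1, _⟩ | ⟨h1, _⟩)
    · exact G.loopless.irrefl a h1
    · exact h1 rfl

/-- Pivoting an edge `uv`: `G ∧ uv = G * u * v * u`. -/
def pivotG {V : Type*} (G : SimpleGraph V) (u v : V) : SimpleGraph V :=
  localComp (localComp (localComp G u) v) u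

/-- Finite simple graphs, concretely represented on `Fin n`. -/
abbrev FinGraph := Σ n : ℕ, SimpleGraph (Fin n)

/-- One step in the construction of a vertex-minor: pass to an isomorphic copy,
perform a local complementation, or delete a vertex. -/
def VMStep (G H : FinGraph) : Prop :=
  Nonempty (G.2 ≃g H.2) ∨
  (∃ v : Fin G.1, Nonempty ((localComp G.2 v) ≃g H.2)) ∨
  (∃ v : Fin G.1, Nonempty ((G.2.induce {u | u ≠ v}) ≃g H.2))

/-- One step in the construction of a pivot-minor: pass to an isomorphic copy,
pivot an edge, or delete a vertex. -/
def PMStep (G H : FinGraph) : Prop :=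
  Nonempty (G.2 ≃g H.2) ∨
  (∃ u v : Fin G.1, G.2.Adj u v ∧ Nonempty ((pivotG G.2 u v) ≃g H.2)) ∨
  (∃ v : Fin G.1, Nonempty ((G.2.induce {u | u ≠ v}) ≃g H.2))

/-- `H` is a vertex-minor of `G` (both given concretely on `Fin _`). -/
def IsVertexMinorFG (H G : FinGraph) : Prop := Relation.ReflTransGen VMStep G H

/-- `H` is a pivot-minor of `G` (both given concretely on `Fin _`). -/
def IsPivotMinorFG (H G : FinGraph) : Prop := Relation.ReflTransGen PMStep G H

/-- A finite graph represented concretely on `Fin (Nat.card V)`. -/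
noncomputable def toFinGraph {V : Type*} [Finite V] (G : SimpleGraph V) : FinGraph :=
  ⟨Nat.card V, G.comap (Finite.equivFin V).symm⟩

/-- `H` is a vertex-minor of `G`. -/
def HasVertexMinor {V W : Type*} [Finite V] [Finite W]
    (G : SimpleGraph V) (H : SimpleGraph W) : Prop :=
  IsVertexMinorFG (toFinGraph H) (toFinGraph G)

/-- `H` is a pivot-minor of `G`. -/
def HasPivotMinor {V W : Type*} [Finite V] [Finite W]
    (G : SimpleGraph V) (H : SimpleGraph W) : Prop :=
  IsPivotMinorFG (toFinGraph H) (toFinGraph G)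

/-- A class of finite graphs closed under isomorphism, local complementation and
vertex deletion. -/
def VertexMinorClosed (𝒢 : Set FinGraph) : Prop :=
  (∀ G ∈ 𝒢, ∀ H : FinGraph, Nonempty (G.2 ≃g H.2) → H ∈ 𝒢) ∧
  (∀ G ∈ 𝒢, ∀ v : Fin G.1, (⟨G.1, localComp G.2 v⟩ : FinGraph) ∈ 𝒢) ∧
  (∀ G ∈ 𝒢, ∀ v : Fin G.1, toFinGraph (G.2.induce {u | u ≠ v}) ∈ 𝒢)

/-- A class of finite graphs closed under isomorphism, pivoting and
vertex deletion. -/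
def PivotMinorClosed (𝒢 : Set FinGraph) : Prop :=
  (∀ G ∈ 𝒢, ∀ H : FinGraph, Nonempty (G.2 ≃g H.2) → H ∈ 𝒢) ∧
  (∀ G ∈ 𝒢, ∀ u v : Fin G.1, G.2.Adj u v → (⟨G.1, pivotG G.2 u v⟩ : FinGraph) ∈ 𝒢) ∧
  (∀ G ∈ 𝒢, ∀ v : Fin G.1, toFinGraph (G.2.induce {u | u ≠ v}) ∈ 𝒢)

/-! ### Chromatic data -/

/-- The chromatic number, as a natural number (graphs here are finite). -/
noncomputable def chi {V : Type*} (G : SimpleGraph V) : ℕ := G.chromaticNumber.toNat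

/-- The ball of radius `ρ` around `v`: all vertices at distance at most `ρ` from `v`. -/
def ballSet {V : Type*} (G : SimpleGraph V) (v : V) (ρ : ℕ) : Set V :=
  {u | ∃ p : G.Walk v u, p.length ≤ ρ}

/-- `χ^{(ρ)}(G)`: the largest chromatic number of a `ρ`-ball of `G`. -/
noncomputable def chiBall {V : Type*} (G : SimpleGraph V) (ρ : ℕ) : ℕ :=
  ⨆ v : V, chi (G.induce (ballSet G v ρ))

/-- The distance from `u` to `v` is at least `n` (in particular, this holds
vacuously for unreachable pairs). -/
def distGE {V : Type*} (G : SimpleGraph V) (u v : V) (n : ℕ) : Prop :=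
  ∀ p : G.Walk u v, n ≤ p.length

/-- A stable (independent) set of vertices. -/
def IsStableSet {V : Type*} (G : SimpleGraph V) (A : Set V) : Prop :=
  ∀ a ∈ A, ∀ b ∈ A, ¬ G.Adj a b

/-- `A` covers `B`: every vertex of `B` has a neighbour in `A`. -/
def Covers {V : Type*} (G : SimpleGraph V) (A B : Set V) : Prop :=
  ∀ b ∈ B, ∃ a ∈ A, G.Adj a b

/-- `A` and `B` are anti-complete: there are no edges between them. -/
def AntiComplete {V : Type*} (G : SimpleGraph V) (A B : Set V) : Prop :=
  ∀ a ∈ A, ∀ b ∈ B, ¬ G.Adj a b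

/-- An induced path of `G`, given as a walk: it is a path, and the only edges of `G`
between its vertices are the edges of the path. -/
def IsInducedPath {V : Type*} (G : SimpleGraph V) {a b : V} (p : G.Walk a b) : Prop :=
  p.IsPath ∧ ∀ x ∈ p.support, ∀ y ∈ p.support, G.Adj x y → p.toSubgraph.Adj x y
/-! ### Big cliques and bloated trees -/

/-- A big clique: a maximal clique (w.r.t. vertex inclusion) of size at least 3. -/
def IsBigClique {V : Type*} (G : SimpleGraph V) (s : Finset V) : Prop :=
  G.IsClique ↑s ∧ 3 ≤ s.card ∧ ∀ t : Finset V, G.IsClique ↑t → s ⊆ t → t = s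

/-- Two vertices are related when they lie in a common big clique. -/
def bigCliqueRel {V : Type*} (G : SimpleGraph V) (u v : V) : Prop :=
  u = v ∨ ∃ s : Finset V, IsBigClique G s ∧ u ∈ s ∧ v ∈ s

/-- The graph obtained by contracting every big clique to a single vertex. -/
def contractBigCliques {V : Type*} (G : SimpleGraph V) :
    SimpleGraph (Quot (bigCliqueRel G)) where
  Adj a b := a ≠ b ∧ ∃ u v, G.Adj u v ∧ Quot.mk _ u = a ∧ Quot.mk _ v = b
  symm := by
    constructor
    rintro a b ⟨hne, u, v, h, hu, hv⟩
    exact ⟨hne.symm, v, u, h.symm, hv, hu⟩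
  loopless := ⟨fun a h => h.1 rfl⟩

/-- A bloated tree: every edge is in at most one big clique, vertices of a big
`k`-clique have degree at most `k`, and contracting all big cliques yields a tree. -/
def IsBloatedTree {V : Type*} (T : SimpleGraph V) : Prop :=
  (∀ u v, T.Adj u v → ∀ s t : Finset V, IsBigClique T s → IsBigClique T t →
    u ∈ s → v ∈ s → u ∈ t → v ∈ t → s = t) ∧
  (∀ s : Finset V, IsBigClique T s → ∀ v ∈ s, (T.neighborSet v).ncard ≤ s.card) ∧
  (contractBigCliques T).IsTree

/-- A leaf: a vertex of degree at most 1. -/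
def IsLeaf {V : Type*} (G : SimpleGraph V) (v : V) : Prop :=
  (G.neighborSet v).ncard ≤ 1

/-- A branching vertex of a bloated tree: a vertex of degree at least 3 that is
not contained in a triangle. -/
def IsBranching {V : Type*} (G : SimpleGraph V) (v : V) : Prop :=
  3 ≤ (G.neighborSet v).ncard ∧ ¬ ∃ a b, G.Adj v a ∧ G.Adj v b ∧ G.Adj a b

/-! ### Dangling paths and contractions -/

/-- The path `p` dangles from `X`: the set of vertices outside `p` with a
neighbour on `p` is exactly `X`. -/
def DanglesFrom {V : Type*} (G : SimpleGraph V) {a b : V} (p : G.Walk a b)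
    (X : Set V) : Prop :=
  {v | v ∉ p.support ∧ ∃ u ∈ p.support, G.Adj v u} = X

/-- The path `p` dangles oddly from `X`: moreover every vertex of `X` has an odd
number of neighbours on `p`. -/
def DanglesOddly {V : Type*} (G : SimpleGraph V) {a b : V} (p : G.Walk a b)
    (X : Set V) : Prop :=
  DanglesFrom G p X ∧ ∀ x ∈ X, Odd ({u | u ∈ p.support ∧ G.Adj x u}.ncard)

/-- Contract the set `S` to the single vertex `a₀` (for `a₀ ∈ S` with `G[S]`
connected this is contraction of all edges inside `S`). -/
def contractSet {V : Type*} (G : SimpleGraph V) (S : Set V) (a₀ : V) :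
    SimpleGraph {w : V // w ∉ S ∨ w = a₀} where
  Adj u v := u ≠ v ∧
    ((u.1 ∉ S ∧ v.1 ∉ S ∧ G.Adj u.1 v.1) ∨
     (u.1 = a₀ ∧ v.1 ∉ S ∧ ∃ s ∈ S, G.Adj s v.1) ∨
     (v.1 = a₀ ∧ u.1 ∉ S ∧ ∃ s ∈ S, G.Adj u.1 s))
  symm := by
    constructor
    rintro u v ⟨hne, h⟩
    refine ⟨hne.symm, ?_⟩
    rcases h with ⟨h1, h2, h3⟩ | ⟨h1, h2, s, hs, hadj⟩ | ⟨h1, h2, s, hs, hadj⟩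
    · exact Or.inl ⟨h2, h1, h3.symm⟩
    · exact Or.inr (Or.inr ⟨h1, h2, s, hs, hadj.symm⟩)
    · exact Or.inr (Or.inl ⟨h1, h2, s, hs, hadj.symm⟩)
  loopless := ⟨fun u h => h.1 rfl⟩

/-! ### Ramsey numbers -/

/-- Every graph on `Fin N` contains a clique of size `n` or a stable set of size `m`. -/
def RamseyProp (N n m : ℕ) : Prop :=
  ∀ G : SimpleGraph (Fin N),
    (∃ s : Finset (Fin N), G.IsNClique n s) ∨ (∃ s : Finset (Fin N), Gᶜ.IsNClique m s)

/-- The Ramsey number `R(n,m)`: the least `N` such that every graph on at least `N`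
vertices contains a clique of size `n` or a stable set of size `m`. -/
noncomputable def ramsey (n m : ℕ) : ℕ := sInf {N | ∀ M, N ≤ M → RamseyProp M n m}

/-! ### Subdivided complete bipartite graphs and interfered versions -/

/-- The vertex set of (an interfered) `K¹_{n,m}`: the `x_i`, the `y_j`, and the
subdivision vertices `z_{i,j}`. -/
abbrev IVert (n m : ℕ) := Fin n ⊕ Fin m ⊕ Fin n × Fin m

/-- `K¹_{n,m}`: the complete bipartite graph `K_{n,m}` with every edge subdivided
exactly once. -/
def KOneBip (n m : ℕ) : SimpleGraph (IVert n m) :=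
  SimpleGraph.fromRel (fun a b => ∃ i j,
    (a = Sum.inl i ∧ b = Sum.inr (Sum.inr (i, j))) ∨
    (a = Sum.inr (Sum.inl j) ∧ b = Sum.inr (Sum.inr (i, j))))

/-- The pairs that may be adjacent in an interfered `K¹_{n,m}`. -/
def InterferedAllowed (n m : ℕ) (a b : IVert n m) : Prop :=
  (∃ i j, a = Sum.inl i ∧ b = Sum.inr (Sum.inr (i, j))) ∨
  (∃ i j, a = Sum.inr (Sum.inl j) ∧ b = Sum.inr (Sum.inr (i, j))) ∨
  (∃ (k i : Fin n) (j : Fin m), k < i ∧ a = Sum.inl k ∧ b = Sum.inr (Sum.inr (i, j)))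

/-- An interfered `K¹_{n,m}`: all edges `x_i z_{i,j}` and `z_{i,j} y_j` are present,
and all other edges are of the form `x_k z_{i,j}` with `k < i`. -/
def IsInterfered (n m : ℕ) (G : SimpleGraph (IVert n m)) : Prop :=
  (∀ i j, G.Adj (Sum.inl i) (Sum.inr (Sum.inr (i, j)))) ∧
  (∀ i j, G.Adj (Sum.inr (Sum.inl j)) (Sum.inr (Sum.inr (i, j)))) ∧
  (∀ a b, G.Adj a b → InterferedAllowed n m a b ∨ InterferedAllowed n m b a)
/-! ### Long covers -/

/-- A long cover `(L⁰, L¹, L², L³)` of a set `C`. -/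
def IsLongCover {V : Type*} (G : SimpleGraph V) (L : Fin 4 → Set V) (C : Set V) : Prop :=
  (∀ i j : Fin 4, i ≠ j → Disjoint (L i) (L j)) ∧
  (∀ i : Fin 4, Disjoint (L i) C) ∧
  (G.induce (L 0)).Connected ∧
  Covers G (L 0) (L 1) ∧ Covers G (L 1) (L 2) ∧ Covers G (L 2) (L 3) ∧
  Covers G (L 3) C ∧
  AntiComplete G C (L 0) ∧ AntiComplete G C (L 1) ∧ AntiComplete G C (L 2) ∧
  AntiComplete G (L 0) (L 2) ∧ AntiComplete G (L 0) (L 3) ∧ AntiComplete G (L 1) (L 3)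

/-- A long `q`-cover of a set `C`. -/
def IsLongQCover {V : Type*} (G : SimpleGraph V) {q : ℕ}
    (ℒ : Fin q → Fin 4 → Set V) (C : Set V) : Prop :=
  (∀ i, IsLongCover G (ℒ i) C) ∧
  (∀ i j, i ≠ j →
    Disjoint (ℒ i 0 ∪ ℒ i 1 ∪ ℒ i 2 ∪ ℒ i 3) (ℒ j 0 ∪ ℒ j 1 ∪ ℒ j 2 ∪ ℒ j 3)) ∧
  (∀ i j, i < j →
    AntiComplete G (ℒ j 0 ∪ ℒ j 1 ∪ ℒ j 2) (ℒ i 0 ∪ ℒ i 1 ∪ ℒ i 2 ∪ ℒ i 3))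

/-! ### Multicovers -/

/-- A multicover `(N_x : x ∈ X)` of a set `C`, where `X` is presented as an
injective tuple `x : Fin m → V` (whose ordering is the total order on `X`). -/
def IsMulticover {V : Type*} (G : SimpleGraph V) {m : ℕ}
    (x : Fin m → V) (N : Fin m → Set V) (C : Set V) : Prop :=
  Function.Injective x ∧
  (∀ i, N i ⊆ G.neighborSet (x i)) ∧
  (∀ i, x i ∉ C) ∧
  (∀ i j, x i ∉ N j) ∧
  (∀ i, Disjoint (N i) C) ∧
  (∀ i j, i ≠ j → Disjoint (N i) (N j)) ∧
  (∀ i j, ¬ G.Adj (x i) (x j)) ∧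
  (∀ i, ∀ u ∈ C, ¬ G.Adj (x i) u) ∧
  (∀ i, ∀ u ∈ C, ∃ w ∈ N i, G.Adj w u) ∧
  (∀ i j, i < j → ∀ u ∈ N i, ¬ G.Adj (x j) u)

/-- A pure multicover: no `x ∈ X` has a neighbour in `N_y` for `y ≠ x`. -/
def IsPureMC {V : Type*} (G : SimpleGraph V) {m : ℕ}
    (x : Fin m → V) (N : Fin m → Set V) : Prop :=
  ∀ i j, i ≠ j → ∀ u ∈ N i, ¬ G.Adj (x j) u

/-- An impure multicover: for `x ≺ y`, `x` is complete to `N_y`. -/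
def IsImpureMC {V : Type*} (G : SimpleGraph V) {m : ℕ}
    (x : Fin m → V) (N : Fin m → Set V) : Prop :=
  ∀ i j, i < j → ∀ u ∈ N j, G.Adj (x i) u
/-! ### Auxiliary machinery for vertex minors -/

section VMachinery

variable {V : Type} {W : Type} {X : Type}

/-- The canonical iso between `toFinGraph G` and `G`. -/
noncomputable def finIso [Finite V] (G : SimpleGraph V) : (toFinGraph G).2 ≃g G :=
  ⟨(Finite.equivFin V).symm, Iff.rfl⟩

lemma vm_iso_step [Finite V] [Finite W] (G : SimpleGraph V) (G' : SimpleGraph W)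
    (e : G ≃g G') : VMStep (toFinGraph G) (toFinGraph G') :=
  Or.inl ⟨(finIso G).trans (e.trans (finIso G').symm)⟩

lemma hvm_of_iso [Finite V] [Finite W] [Finite X] {G : SimpleGraph V} {G' : SimpleGraph W}
    (e : G ≃g G') {H : SimpleGraph X} (h : HasVertexMinor G' H) : HasVertexMinor G H :=
  Relation.ReflTransGen.trans (Relation.ReflTransGen.single (vm_iso_step G G' e)) h

lemma hvm_refl [Finite V] (G : SimpleGraph V) : HasVertexMinor G G :=
  Relation.ReflTransGen.refl

lemma hvm_iso_only [Finite V] [Finite W] {G : SimpleGraph V} {G' : SimpleGraph W}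
    (e : G ≃g G') : HasVertexMinor G G' :=
  hvm_of_iso e (hvm_refl G')

lemma hvm_trans [Finite V] [Finite W] [Finite X] {G : SimpleGraph V} {G' : SimpleGraph W}
    {H : SimpleGraph X} (h1 : HasVertexMinor G G') (h2 : HasVertexMinor G' H) :
    HasVertexMinor G H :=
  Relation.ReflTransGen.trans h1 h2

lemma vm_lc_step [Finite V] (G : SimpleGraph V) (v : V) :
    VMStep (toFinGraph G) (toFinGraph (localComp G v)) := by
  refine Or.inr (Or.inl ⟨(Finite.equivFin V) v, ⟨⟨Equiv.refl _, ?_⟩⟩⟩)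
  intro a b
  have hinj : (Finite.equivFin V).symm a = (Finite.equivFin V).symm b ↔ a = b :=
    (Finite.equivFin V).symm.injective.eq_iff
  simp only [Equiv.refl_apply, toFinGraph, localComp, SimpleGraph.comap_adj,
    Equiv.symm_apply_apply, hinj]
  tauto

lemma hvm_localComp [Finite V] [Finite X] {G : SimpleGraph V} (v : V) {H : SimpleGraph X}
    (h : HasVertexMinor (localComp G v) H) : HasVertexMinor G H :=
  Relation.ReflTransGen.trans (Relation.ReflTransGen.single (vm_lc_step G v)) h

lemma vm_del_step [Finite V] (G : SimpleGraph V) (v : V) :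
    VMStep (toFinGraph G) (toFinGraph (G.induce {u | u ≠ v})) := by
  classical
  refine Or.inr (Or.inr ⟨(Finite.equivFin V) v, ⟨?_⟩⟩)
  have step1 : ((toFinGraph G).2.induce {u | u ≠ (Finite.equivFin V) v}) ≃g
      (G.induce {u | u ≠ v}) := by
    refine ⟨Equiv.subtypeEquiv (Finite.equivFin V).symm ?_, ?_⟩
    · intro a
      simp only [Set.mem_setOf_eq]
      constructor
      · intro h h2; exact h (by rw [← h2, Equiv.apply_symm_apply])
      · intro h h2; apply h; rw [h2, Equiv.symm_apply_apply]
    · intro a b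
      rfl
  exact step1.trans (finIso (G.induce {u | u ≠ v})).symm

lemma hvm_delete [Finite V] [Finite X] {G : SimpleGraph V} (v : V) {H : SimpleGraph X}
    (h : HasVertexMinor (G.induce {u | u ≠ v}) H) : HasVertexMinor G H :=
  Relation.ReflTransGen.trans (Relation.ReflTransGen.single (vm_del_step G v)) h

/-- Passing to an arbitrary induced subgraph preserves having a vertex minor. -/
lemma hvm_induce [Finite X] {H : SimpleGraph X} :
    ∀ (n : ℕ) {V : Type} [Finite V] (G : SimpleGraph V) (s : Set V),
      (sᶜ.ncard ≤ n) → HasVertexMinor (G.induce s) H → HasVertexMinor G H := by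
  intro n
  induction n with
  | zero =>
    intro V _ G s hn hvm
    have h0 : sᶜ.ncard = 0 := Nat.le_antisymm hn (Nat.zero_le _)
    have hemp : sᶜ = ∅ := (Set.ncard_eq_zero (Set.toFinite _)).1 h0
    have hs : s = Set.univ := by
      rw [← Set.compl_empty_iff, hemp]
    subst hs
    exact hvm_of_iso (SimpleGraph.induceUnivIso G).symm hvm
  | succ n ih =>
    intro V _ G s hn hvm
    by_cases hs : s = Set.univ
    · subst hs; exact hvm_of_iso (SimpleGraph.induceUnivIso G).symm hvm
    · have : sᶜ.Nonempty := by
        rw [Set.nonempty_compl]; exact hs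
      obtain ⟨v, hv⟩ := this
      apply hvm_delete v
      set s' : Set {u : V | u ≠ v} := {u | (u : V) ∈ s} with hs'
      have hcard : (s'ᶜ).ncard ≤ n := by
        have hinj : Set.InjOn (fun u : {u : V | u ≠ v} => (u : V)) s'ᶜ :=
          fun a _ b _ h => Subtype.ext h
        have hmap : (fun u : {u : V | u ≠ v} => (u : V)) '' s'ᶜ ⊆ sᶜ \ {v} := by
          rintro _ ⟨u, hu, rfl⟩
          exact ⟨hu, u.2⟩
        have h1 : (s'ᶜ).ncard ≤ (sᶜ \ {v}).ncard := by
          calc (s'ᶜ).ncard = ((fun u : {u : V | u ≠ v} => (u : V)) '' s'ᶜ).ncard :=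
                (Set.ncard_image_of_injOn hinj).symm
            _ ≤ (sᶜ \ {v}).ncard := Set.ncard_le_ncard hmap (Set.toFinite _)
        have h2 : (sᶜ \ {v}).ncard = sᶜ.ncard - 1 :=
          Set.ncard_diff_singleton_of_mem hv
        have h3 : 0 < sᶜ.ncard := Set.ncard_pos (Set.toFinite _) |>.2 ⟨v, hv⟩
        omega
      apply ih (G.induce {u | u ≠ v}) s' hcard
      refine hvm_of_iso ?_ hvm
      exact ⟨⟨fun u => ⟨u.1.1, u.2⟩,
              fun u => ⟨⟨u.1, fun h => hv (h ▸ u.2)⟩, u.2⟩,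
              fun u => rfl, fun u => rfl⟩, Iff.rfl⟩

end VMachinery
section PivotFormulas

variable {V : Type} (G : SimpleGraph V)

lemma localComp_adj (v a b : V) :
    (localComp G v).Adj a b ↔ ((G.Adj a b ∧ ¬(G.Adj v a ∧ G.Adj v b)) ∨
      (a ≠ b ∧ ¬ G.Adj a b ∧ G.Adj v a ∧ G.Adj v b)) := Iff.rfl

lemma localComp_adj_ne {v a b : V} (hab : a ≠ b) :
    (localComp G v).Adj a b ↔ (G.Adj a b ↔ ¬(G.Adj v a ∧ G.Adj v b)) := by
  rw [localComp_adj]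
  tauto

lemma localComp_adj_self (v w : V) : (localComp G v).Adj v w ↔ G.Adj v w := by
  rw [localComp_adj]
  have := G.loopless.irrefl v
  tauto

set_option maxHeartbeats 3000000 in
lemma pivot_adj {u v a b : V} (huv : G.Adj u v) (hau : a ≠ u) (hav : a ≠ v)
    (hbu : b ≠ u) (hbv : b ≠ v) :
    (pivotG G u v).Adj a b ↔
      (G.Adj a b ↔ ¬((G.Adj u a ∧ G.Adj v b ∧ ¬(G.Adj v a ∧ G.Adj u b)) ∨
        (G.Adj v a ∧ G.Adj u b ∧ ¬(G.Adj u a ∧ G.Adj v b)))) := by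
  have hvu : G.Adj v u := huv.symm
  have huu := G.loopless.irrefl u
  have hvv := G.loopless.irrefl v
  have hne : u ≠ v := huv.ne
  have hne' : v ≠ u := hne.symm
  have hua : u ≠ a := hau.symm
  have hva : v ≠ a := hav.symm
  have hub : u ≠ b := hbu.symm
  have hvb : v ≠ b := hbv.symm
  by_cases hab : a = b
  · subst hab
    have haa := G.loopless.irrefl a
    have haa' := (pivotG G u v).loopless.irrefl a
    simp only [SimpleGraph.irrefl] at haa' ⊢
    tauto
  · simp only [pivotG, localComp_adj]
    by_cases h1 : G.Adj u a <;> by_cases h2 : G.Adj u b <;>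
    by_cases h3 : G.Adj v a <;> by_cases h4 : G.Adj v b <;>
    by_cases h5 : G.Adj a b <;>
      simp_all <;> tauto

set_option maxHeartbeats 1000000 in
lemma pivot_adj_swap_u {u v b : V} (huv : G.Adj u v) (hbu : b ≠ u) (hbv : b ≠ v) :
    (pivotG G u v).Adj u b ↔ G.Adj v b := by
  have hvu : G.Adj v u := huv.symm
  have huu := G.loopless.irrefl u
  have hvv := G.loopless.irrefl v
  have hne : u ≠ v := huv.ne
  simp only [pivotG, localComp]
  by_cases h2 : G.Adj u b <;> by_cases h4 : G.Adj v b <;>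
    simp_all <;> tauto

set_option maxHeartbeats 1000000 in
lemma pivot_adj_swap_v {u v b : V} (huv : G.Adj u v) (hbu : b ≠ u) (hbv : b ≠ v) :
    (pivotG G u v).Adj v b ↔ G.Adj u b := by
  have hvu : G.Adj v u := huv.symm
  have huu := G.loopless.irrefl u
  have hvv := G.loopless.irrefl v
  have hne : u ≠ v := huv.ne
  have hne' : v ≠ u := hne.symm
  have hub : u ≠ b := hbu.symm
  have hvb : v ≠ b := hbv.symm
  simp only [pivotG, localComp_adj]
  by_cases h2 : G.Adj u b <;> by_cases h4 : G.Adj v b <;>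
    simp_all

end PivotFormulas
section MainConstruction

/-- The `x` vertices. -/
abbrev Xv {q h : ℕ} (k : Fin q) : IVert q h := Sum.inl k
/-- The `y` vertices. -/
abbrev Yv {q h : ℕ} (j : Fin h) : IVert q h := Sum.inr (Sum.inl j)
/-- The subdivision vertices. -/
abbrev Zv {q h : ℕ} (i : Fin q) (j : Fin h) : IVert q h := Sum.inr (Sum.inr (i, j))

/-- The set of edges among the `y` vertices created by the stages `≥ s`. -/
def Ledger {n h : ℕ} (Gadj : Fin n → Fin n → Prop) (col : Fin n → Fin h)
    (s : ℕ) (j j' : Fin h) : Prop :=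
  ∃ a b : Fin n, (b : ℕ) < a ∧ s ≤ (a : ℕ) ∧ Gadj a b ∧
    ((j = col a ∧ j' = col b) ∨ (j = col b ∧ j' = col a))

/-- Facts about the ambient interfered graph and the target adjacency. -/
structure Facts {n h : ℕ} (Gadj : Fin n → Fin n → Prop) (col : Fin n → Fin h)
    (H : SimpleGraph (IVert (n+1) h)) : Prop where
  hsymm : ∀ a b, Gadj a b → Gadj b a
  hirr : ∀ a, ¬ Gadj a a
  hcol : Function.Injective col
  F1 : ∀ i j, H.Adj (Xv i) (Zv i j)
  F2 : ∀ i j, H.Adj (Yv j) (Zv i j)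
  F3 : ∀ i j j', H.Adj (Yv j') (Zv i j) → j' = j
  F4 : ∀ i j i' j', ¬ H.Adj (Zv i j) (Zv i' j')
  F5 : ∀ k k', ¬ H.Adj (Xv k) (Xv k')
  F6 : ∀ k j, ¬ H.Adj (Xv k) (Yv j)
  F7 : ∀ j j', ¬ H.Adj (Yv j) (Yv j')
  F8 : ∀ k i j, H.Adj (Xv k) (Zv i j) → (k : ℕ) ≤ (i : ℕ)
  huni : ∀ (i k : Fin (n+1)) (b b' : Fin n),
    H.Adj (Xv k) (Zv i (col b)) ↔ H.Adj (Xv k) (Zv i (col b'))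

/-- The invariant maintained during the construction:  all `z`'s in rows `< s`
still have their original neighbourhoods, the `x`'s of index `< s` have no
neighbours among the `x`'s of index `< s` nor among the `y`'s, and the `y`–`y`
adjacencies are exactly those recorded in the ledger. -/
def StInv {n h : ℕ} (Gadj : Fin n → Fin n → Prop) (col : Fin n → Fin h)
    (H : SimpleGraph (IVert (n+1) h)) (s : ℕ) (Γ : SimpleGraph (IVert (n+1) h)) : Prop :=
  (∀ (i : Fin (n+1)), (i : ℕ) < s → ∀ (j : Fin h) (w : IVert (n+1) h),
      Γ.Adj (Zv i j) w ↔ H.Adj (Zv i j) w) ∧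
  (∀ (k k' : Fin (n+1)), (k : ℕ) < s → (k' : ℕ) < s → ¬ Γ.Adj (Xv k) (Xv k')) ∧
  (∀ (k : Fin (n+1)), (k : ℕ) < s → ∀ j, ¬ Γ.Adj (Xv k) (Yv j)) ∧
  (∀ j j', Γ.Adj (Yv j) (Yv j') ↔ Ledger Gadj col s j j')

/-- The invariant in the middle of processing row `a`. -/
def StMid {n h : ℕ} (Gadj : Fin n → Fin n → Prop) (col : Fin n → Fin h)
    (H : SimpleGraph (IVert (n+1) h)) (a : Fin n) (done : Fin n → Prop)
    (Γ : SimpleGraph (IVert (n+1) h)) : Prop :=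
  (∀ (i : Fin (n+1)), (i : ℕ) < (a : ℕ) → ∀ (j : Fin h) (w : IVert (n+1) h),
      Γ.Adj (Zv i j) w ↔ H.Adj (Zv i j) w) ∧
  (∀ (k k' : Fin (n+1)), (k : ℕ) < (a : ℕ) → (k' : ℕ) < (a : ℕ) →
      ¬ Γ.Adj (Xv k) (Xv k')) ∧
  (∀ (k : Fin (n+1)), (k : ℕ) < (a : ℕ) → ∀ j, ¬ Γ.Adj (Xv k) (Yv j)) ∧
  (∀ j j', Γ.Adj (Yv j) (Yv j') ↔
    (Ledger Gadj col ((a : ℕ)+1) j j' ∨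
      ∃ b : Fin n, done b ∧ (b : ℕ) < (a : ℕ) ∧ Gadj a b ∧
        ((j = col b ∧ j' = col a) ∨ (j = col a ∧ j' = col b)))) ∧
  (∀ b : Fin n, (b : ℕ) < (a : ℕ) → Gadj a b → ∀ w : IVert (n+1) h,
      Γ.Adj (Zv (Fin.castSucc a) (col b)) w ↔
        (w = Yv (col b) ∨ w = Yv (col a) ∨ w = Zv (Fin.castSucc a) (col a)))

namespace Facts

variable {n h : ℕ} {Gadj : Fin n → Fin n → Prop} {col : Fin n → Fin h}
variable {H : SimpleGraph (IVert (n+1) h)}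

lemma adj_cases
    (h3 : ∀ a b, H.Adj a b → InterferedAllowed (n+1) h a b ∨ InterferedAllowed (n+1) h b a)
    {a b : IVert (n+1) h} (hadj : H.Adj a b) :
    (∃ (k i : Fin (n+1)) (j : Fin h), (k : ℕ) ≤ (i : ℕ) ∧
      ((a = Xv k ∧ b = Zv i j) ∨ (b = Xv k ∧ a = Zv i j))) ∨
    (∃ (i : Fin (n+1)) (j : Fin h), (a = Yv j ∧ b = Zv i j) ∨ (b = Yv j ∧ a = Zv i j)) := by
  rcases h3 _ _ hadj with hall | hall <;>
    rcases hall with ⟨i, j, e1, e2⟩ | ⟨i, j, e1, e2⟩ | ⟨k, i, j, hlt, e1, e2⟩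
  · exact Or.inl ⟨i, i, j, le_refl _, Or.inl ⟨e1, e2⟩⟩
  · exact Or.inr ⟨i, j, Or.inl ⟨e1, e2⟩⟩
  · exact Or.inl ⟨k, i, j, le_of_lt hlt, Or.inl ⟨e1, e2⟩⟩
  · exact Or.inl ⟨i, i, j, le_refl _, Or.inr ⟨e1, e2⟩⟩
  · exact Or.inr ⟨i, j, Or.inr ⟨e1, e2⟩⟩
  · exact Or.inl ⟨k, i, j, le_of_lt hlt, Or.inr ⟨e1, e2⟩⟩

lemma of_interfered (hsymm : ∀ a b, Gadj a b → Gadj b a) (hirr : ∀ a, ¬ Gadj a a)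
    (hcol : Function.Injective col)
    (huni : ∀ (i k : Fin (n+1)) (b b' : Fin n),
      H.Adj (Xv k) (Zv i (col b)) ↔ H.Adj (Xv k) (Zv i (col b')))
    (hH : IsInterfered (n+1) h H) : Facts Gadj col H := by
  obtain ⟨h1, h2, h3⟩ := hH
  refine ⟨hsymm, hirr, hcol, h1, h2, ?_, ?_, ?_, ?_, ?_, ?_, huni⟩
  · intro i j j' hadj
    rcases adj_cases h3 hadj with ⟨k2, i2, j2, _, ⟨e1, e2⟩ | ⟨e1, e2⟩⟩ |
      ⟨i2, j2, ⟨e1, e2⟩ | ⟨e1, e2⟩⟩ <;> simp at e1 e2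
    exact e1.trans e2.2.symm
  · intro i j i' j' hadj
    rcases adj_cases h3 hadj with ⟨k2, i2, j2, _, ⟨e1, e2⟩ | ⟨e1, e2⟩⟩ |
      ⟨i2, j2, ⟨e1, e2⟩ | ⟨e1, e2⟩⟩ <;> simp at e1 e2
  · intro k k' hadj
    rcases adj_cases h3 hadj with ⟨k2, i2, j2, _, ⟨e1, e2⟩ | ⟨e1, e2⟩⟩ |
      ⟨i2, j2, ⟨e1, e2⟩ | ⟨e1, e2⟩⟩ <;> simp at e1 e2
  · intro k j hadj
    rcases adj_cases h3 hadj with ⟨k2, i2, j2, _, ⟨e1, e2⟩ | ⟨e1, e2⟩⟩ |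
      ⟨i2, j2, ⟨e1, e2⟩ | ⟨e1, e2⟩⟩ <;> simp at e1 e2
  · intro j j' hadj
    rcases adj_cases h3 hadj with ⟨k2, i2, j2, _, ⟨e1, e2⟩ | ⟨e1, e2⟩⟩ |
      ⟨i2, j2, ⟨e1, e2⟩ | ⟨e1, e2⟩⟩ <;> simp at e1 e2
  · intro k i j hadj
    rcases adj_cases h3 hadj with ⟨k2, i2, j2, hle, ⟨e1, e2⟩ | ⟨e1, e2⟩⟩ |
      ⟨i2, j2, ⟨e1, e2⟩ | ⟨e1, e2⟩⟩ <;> simp at e1 e2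
    subst e1
    obtain ⟨rfl, rfl⟩ := e2
    exact hle

end Facts

section LedgerLemmas

variable {n h : ℕ} {Gadj : Fin n → Fin n → Prop} {col : Fin n → Fin h}
variable {H : SimpleGraph (IVert (n+1) h)}

lemma Ledger_irrefl (C : Facts Gadj col H) (s : ℕ) (j : Fin h) :
    ¬ Ledger Gadj col s j j := by
  rintro ⟨a, b, hba, _, _, (⟨e1, e2⟩ | ⟨e1, e2⟩)⟩ <;>
  · rw [e1] at e2
    have := C.hcol e2
    omega

lemma Ledger_top (C : Facts Gadj col H) (j j' : Fin h) :
    ¬ Ledger Gadj col n j j' := by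
  rintro ⟨a, b, _, hge, _, _⟩
  have := a.2
  omega

lemma Ledger_succ (C : Facts Gadj col H) (a : Fin n) (j j' : Fin h) :
    Ledger Gadj col (a : ℕ) j j' ↔
      (Ledger Gadj col ((a : ℕ)+1) j j' ∨
        ∃ b : Fin n, ((b : ℕ) < (a : ℕ) ∧ Gadj a b) ∧ (b : ℕ) < (a : ℕ) ∧ Gadj a b ∧
          ((j = col b ∧ j' = col a) ∨ (j = col a ∧ j' = col b))) := by
  constructor
  · rintro ⟨a', b', hba, hge, hG, hp⟩
    rcases Nat.lt_or_ge (a : ℕ) (a' : ℕ) with hlt | hle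
    · exact Or.inl ⟨a', b', hba, hlt, hG, hp⟩
    · have haa : a' = a := Fin.ext (by omega)
      subst haa
      exact Or.inr ⟨b', ⟨hba, hG⟩, hba, hG, hp.symm⟩
  · rintro (⟨a', b', hba, hge, hG, hp⟩ | ⟨b, _, hba, hG, hp⟩)
    · exact ⟨a', b', hba, by omega, hG, hp⟩
    · exact ⟨a, b, hba, le_refl _, hG, hp.symm⟩

/-- The pair `(col b₀, col a)` is never in `Ledger (a+1)` nor produced by
`done`-sets avoiding `b₀`. -/
lemma Ledger_succ_not_pair (C : Facts Gadj col H) (a b0 : Fin n) (hb0 : (b0 : ℕ) < (a : ℕ))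
    {j j' : Fin h} (hjj' : (j = col b0 ∧ j' = col a) ∨ (j = col a ∧ j' = col b0)) :
    ¬ Ledger Gadj col ((a : ℕ)+1) j j' := by
  rintro ⟨a', b', hba, hge, hG, hp⟩
  rcases hjj' with ⟨e1, e2⟩ | ⟨e1, e2⟩ <;> subst e1 <;> subst e2 <;>
    rcases hp with ⟨e3, e4⟩ | ⟨e3, e4⟩ <;>
    · have h1 := C.hcol e3
      have h2 := C.hcol e4
      omega

end LedgerLemmas
section PivotStage

variable {n h : ℕ} {Gadj : Fin n → Fin n → Prop} {col : Fin n → Fin h}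
variable {H : SimpleGraph (IVert (n+1) h)}

lemma vert_cases {q h' : ℕ} (w : IVert q h') :
    (∃ k, w = Xv k) ∨ (∃ j, w = Yv j) ∨ (∃ i j, w = Zv i j) := by
  rcases w with k | jw | ⟨iw, jw⟩
  · exact Or.inl ⟨k, rfl⟩
  · exact Or.inr (Or.inl ⟨jw, rfl⟩)
  · exact Or.inr (Or.inr ⟨iw, jw, rfl⟩)

lemma hHzy (C : Facts Gadj col H) (i : Fin (n+1)) (jz j : Fin h) :
    H.Adj (Zv i jz) (Yv j) ↔ j = jz := by
  rw [H.adj_comm]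
  exact ⟨C.F3 i jz j, fun e => e ▸ C.F2 i jz⟩

lemma pivot_stage (C : Facts Gadj col H) (a : Fin n) (Γ : SimpleGraph (IVert (n+1) h))
    (hΓ : StInv Gadj col H ((a : ℕ)+1) Γ) :
    StMid Gadj col H a (fun _ => False)
      (pivotG Γ (Xv (Fin.castSucc a)) (Zv (Fin.castSucc a) (col a))) := by
  obtain ⟨hZ, hXX, hXY, hY⟩ := hΓ
  set ra : Fin (n+1) := Fin.castSucc a with hradef
  have hra : (ra : ℕ) = (a : ℕ) := by simp [hradef]
  have hralt : (ra : ℕ) < (a : ℕ) + 1 := by omega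
  set u : IVert (n+1) h := Xv ra with hudef
  set v : IVert (n+1) h := Zv ra (col a) with hvdef
  have hv_spec : ∀ (j : Fin h) (w : IVert (n+1) h),
      Γ.Adj (Zv ra j) w ↔ H.Adj (Zv ra j) w := fun j w => hZ ra hralt j w
  have huv : Γ.Adj u v := by
    rw [Γ.adj_comm, hvdef, hudef, hv_spec (col a) (Xv ra), H.adj_comm]
    exact C.F1 ra (col a)
  have hΓu_z : ∀ (i : Fin (n+1)), (i : ℕ) < (a : ℕ) → ∀ j, ¬ Γ.Adj u (Zv i j) := by
    intro i hi j
    rw [Γ.adj_comm, hudef, hZ i (by omega) j (Xv ra)]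
    intro hadj
    have := C.F8 ra i j ((H.adj_comm _ _).mp hadj)
    omega
  have hΓv_w : ∀ w, Γ.Adj v w ↔ H.Adj v w := fun w => hv_spec (col a) w
  have hΓu_x : ∀ k : Fin (n+1), (k : ℕ) < (a : ℕ) + 1 → ¬ Γ.Adj u (Xv k) :=
    fun k hk => hXX ra k hralt hk
  have hΓu_y : ∀ j, ¬ Γ.Adj u (Yv j) := fun j => hXY ra hralt j
  have hcolba : ∀ b : Fin n, (b : ℕ) < (a : ℕ) → ¬ (col b = col a) := by
    intro b hb e
    have h2 : (b : ℕ) = (a : ℕ) := by rw [C.hcol e]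
    omega
  refine ⟨?_, ?_, ?_, ?_, ?_⟩
  -- Clause 1 : active z rows keep their original neighbourhoods
  · intro i hi j w
    have hpu : Zv i j ≠ u := by simp [hudef, Xv, Zv]
    have hpv : Zv i j ≠ v := by
      simp only [hvdef, Zv, ne_eq, Sum.inr.injEq, Prod.mk.injEq, not_and]
      intro e
      exfalso
      have : (i : ℕ) = (ra : ℕ) := by rw [e]
      omega
    have hHzu : ¬ H.Adj (Zv i j) u := by
      rw [hudef, H.adj_comm]
      intro hadj
      have := C.F8 ra i j hadj
      omega
    have hΓvz : ¬ Γ.Adj v (Zv i j) := by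
      rw [hΓv_w, hvdef]; exact C.F4 ra (col a) i j
    have hΓuz : ¬ Γ.Adj u (Zv i j) := hΓu_z i hi j
    by_cases hw1 : w = u
    · subst hw1
      refine iff_of_false ?_ hHzu
      rw [SimpleGraph.adj_comm, pivot_adj_swap_u Γ huv hpu hpv]
      exact hΓvz
    by_cases hw2 : w = v
    · subst hw2
      refine iff_of_false ?_ (by rw [hvdef]; exact C.F4 i j ra (col a))
      rw [SimpleGraph.adj_comm, pivot_adj_swap_v Γ huv hpu hpv]
      exact hΓuz
    by_cases hw3 : w = Zv i j
    · subst hw3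
      exact iff_of_false ((pivotG Γ u v).loopless.irrefl _) (H.loopless.irrefl _)
    rw [pivot_adj Γ huv hpu hpv hw1 hw2]
    simp only [hΓuz, hΓvz, false_and, and_false, false_or, or_false, or_self,
      not_false_eq_true, iff_true]
    exact hZ i (by omega) j w
  -- Clause 2 : x–x
  · intro k k' hk hk'
    have hku : Xv k ≠ u := by
      simp only [hudef, Xv, ne_eq, Sum.inl.injEq]
      intro e
      have : (k : ℕ) = (ra : ℕ) := by rw [e]
      omega
    have hk'u : Xv k' ≠ u := by
      simp only [hudef, Xv, ne_eq, Sum.inl.injEq]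
      intro e
      have : (k' : ℕ) = (ra : ℕ) := by rw [e]
      omega
    have hkv : Xv k ≠ v := by simp [hvdef, Xv, Zv]
    have hk'v : Xv k' ≠ v := by simp [hvdef, Xv, Zv]
    have h1 : ¬ Γ.Adj u (Xv k) := hΓu_x k (by omega)
    have h2 : ¬ Γ.Adj u (Xv k') := hΓu_x k' (by omega)
    rw [pivot_adj Γ huv hku hkv hk'u hk'v]
    simp only [h1, h2, false_and, and_false, false_or, or_false, or_self,
      not_false_eq_true, iff_true]
    exact hXX k k' (by omega) (by omega)
  -- Clause 3 : x–y
  · intro k hk j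
    have hku : Xv k ≠ u := by
      simp only [hudef, Xv, ne_eq, Sum.inl.injEq]
      intro e
      have : (k : ℕ) = (ra : ℕ) := by rw [e]
      omega
    have hkv : Xv k ≠ v := by simp [hvdef, Xv, Zv]
    have hju : Yv j ≠ u := by simp [hudef, Xv, Yv]
    have hjv : Yv j ≠ v := by simp [hvdef, Yv, Zv]
    have h1 : ¬ Γ.Adj u (Xv k) := hΓu_x k (by omega)
    have h2 : ¬ Γ.Adj u (Yv j) := hΓu_y j
    rw [pivot_adj Γ huv hku hkv hju hjv]
    simp only [h1, h2, false_and, and_false, false_or, or_false, or_self,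
      not_false_eq_true, iff_true]
    exact hXY k (by omega) j
  -- Clause 4 : y–y ledger
  · intro j j'
    simp only [false_and, exists_false, or_false]
    by_cases hjj : j = j'
    · subst hjj
      exact iff_of_false ((pivotG Γ u v).loopless.irrefl _) (Ledger_irrefl C _ j)
    have hju : Yv j ≠ u := by simp [hudef, Xv, Yv]
    have hjv : Yv j ≠ v := by simp [hvdef, Yv, Zv]
    have hj'u : Yv j' ≠ u := by simp [hudef, Xv, Yv]
    have hj'v : Yv j' ≠ v := by simp [hvdef, Yv, Zv]
    rw [pivot_adj Γ huv hju hjv hj'u hj'v]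
    simp only [hΓu_y j, hΓu_y j', false_and, and_false, false_or, or_false, or_self,
      not_false_eq_true, iff_true]
    exact hY j j'
  -- Clause 5 : the prepared z's of row a
  · intro b hb hGab w
    have hzbu : Zv ra (col b) ≠ u := by simp [hudef, Xv, Zv]
    have hzbv : Zv ra (col b) ≠ v := by
      simp only [hvdef, Zv, ne_eq, Sum.inr.injEq, Prod.mk.injEq, not_and]
      intro _
      exact hcolba b hb
    have hΓuzb : Γ.Adj u (Zv ra (col b)) := by
      rw [Γ.adj_comm, hudef, hv_spec (col b) (Xv ra), H.adj_comm]
      exact C.F1 ra (col b)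
    have hΓvzb : ¬ Γ.Adj v (Zv ra (col b)) := by
      rw [hΓv_w, hvdef]
      exact C.F4 ra (col a) ra (col b)
    by_cases hw1 : w = u
    · subst hw1
      refine iff_of_false ?_ (by simp [hudef, hvdef, Xv, Yv, Zv])
      rw [SimpleGraph.adj_comm, pivot_adj_swap_u Γ huv hzbu hzbv]
      exact hΓvzb
    by_cases hw2 : w = v
    · subst hw2
      refine iff_of_true ?_ (by simp [hvdef, hradef])
      rw [SimpleGraph.adj_comm, pivot_adj_swap_v Γ huv hzbu hzbv]
      exact hΓuzb
    by_cases hw3 : w = Zv ra (col b)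
    · subst hw3
      refine iff_of_false ((pivotG Γ u v).loopless.irrefl _) ?_
      simp only [hvdef, Zv, Yv, Sum.inr.injEq, Prod.mk.injEq, not_or]
      refine ⟨by simp, by simp, ?_⟩
      simp only [not_and]
      intro _
      exact hcolba b hb
    rw [pivot_adj Γ huv hzbu hzbv hw1 hw2]
    simp only [hΓuzb, hΓvzb, true_and, false_and, and_false, false_or, or_false,
      not_false_eq_true, and_true]
    rw [hv_spec (col b) w, hΓv_w w]
    rcases vert_cases w with ⟨k, rfl⟩ | ⟨jw, rfl⟩ | ⟨iw, jw, rfl⟩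
    · -- w = Xv k : interference uniformity cancels
      have e2 : H.Adj (Zv ra (col b)) (Xv k) ↔ H.Adj v (Xv k) := by
        rw [hvdef]
        constructor
        · intro hx
          exact ((C.huni ra k b a).mp hx.symm).symm
        · intro hx
          exact ((C.huni ra k a b).mp hx.symm).symm
      rw [e2]
      simp only [iff_not_self, false_iff, not_or]
      exact ⟨by simp [Xv, Yv], by simp [Xv, Yv], hw2⟩
    · -- w = Yv jw
      rw [hHzy C ra (col b) jw, hvdef, hHzy C ra (col a) jw]
      have hne := hcolba b hb
      by_cases h1 : jw = col b <;> by_cases h2 : jw = col a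
      · exact absurd (h1.symm.trans h2) hne
      · simp_all [Yv, Zv, Sum.inr.injEq, Sum.inl.injEq]
      · simp_all [Yv, Zv, Sum.inr.injEq, Sum.inl.injEq]
      · simp_all [Yv, Zv, Sum.inr.injEq, Sum.inl.injEq]
    · -- w = Zv iw jw
      have hF1 : ¬ H.Adj (Zv ra (col b)) (Zv iw jw) := C.F4 _ _ _ _
      have hF2 : ¬ H.Adj v (Zv iw jw) := by rw [hvdef]; exact C.F4 _ _ _ _
      refine iff_of_false (by simp [hF1, hF2]) ?_
      simp only [not_or]
      exact ⟨by simp [Yv, Zv], by simp [Yv, Zv], hw2⟩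

end PivotStage
section LCStage

variable {n h : ℕ} {Gadj : Fin n → Fin n → Prop} {col : Fin n → Fin h}
variable {H : SimpleGraph (IVert (n+1) h)}

lemma lc_stage (C : Facts Gadj col H) (a : Fin n) (done : Fin n → Prop)
    (Γ : SimpleGraph (IVert (n+1) h)) (hΓ : StMid Gadj col H a done Γ)
    (b0 : Fin n) (hb0d : ¬ done b0) (hb0 : (b0 : ℕ) < (a : ℕ)) (hG0 : Gadj a b0) :
    StMid Gadj col H a (fun b => done b ∨ b = b0)
      (localComp Γ (Zv (Fin.castSucc a) (col b0))) := by
  obtain ⟨hZ, hXX, hXY, hY, hW⟩ := hΓ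
  set ra : Fin (n+1) := Fin.castSucc a with hradef
  have hra : (ra : ℕ) = (a : ℕ) := by simp [hradef]
  set z0 : IVert (n+1) h := Zv ra (col b0) with hz0def
  have hcolba : ∀ b : Fin n, (b : ℕ) < (a : ℕ) → ¬ (col b = col a) := by
    intro b hb e
    have h2 : (b : ℕ) = (a : ℕ) := by rw [C.hcol e]
    omega
  have hW0 : ∀ w, Γ.Adj z0 w ↔
      (w = Yv (col b0) ∨ w = Yv (col a) ∨ w = Zv ra (col a)) := hW b0 hb0 hG0
  have hAiff : ∀ j, Γ.Adj z0 (Yv j) ↔ (j = col b0 ∨ j = col a) := by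
    intro j
    rw [hW0]
    simp [Yv, Zv]
  refine ⟨?_, ?_, ?_, ?_, ?_⟩
  -- Clause 1
  · intro i hi j w
    have hzp : ¬ Γ.Adj z0 (Zv i j) := by
      rw [hW0]
      simp only [Zv, Yv, Sum.inr.injEq, Prod.mk.injEq, not_or]
      refine ⟨by simp, by simp, ?_⟩
      simp only [not_and]
      intro e
      exfalso
      have : (i : ℕ) = (ra : ℕ) := by rw [e]
      omega
    by_cases hw : w = Zv i j
    · subst hw
      exact iff_of_false ((localComp Γ z0).loopless.irrefl _) (H.loopless.irrefl _)
    rw [localComp_adj_ne Γ (fun e => hw e.symm)]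
    simp only [hzp, false_and, not_false_eq_true, iff_true]
    exact hZ i hi j w
  -- Clause 2
  · intro k k' hk hk'
    have hzp : ¬ Γ.Adj z0 (Xv k) := by rw [hW0]; simp [Xv, Yv, Zv]
    by_cases hw : (Xv k' : IVert (n+1) h) = Xv k
    · rw [hw]; exact (localComp Γ z0).loopless.irrefl _
    rw [localComp_adj_ne Γ (fun e => hw e.symm)]
    simp only [hzp, false_and, not_false_eq_true, iff_true]
    exact hXX k k' hk hk'
  -- Clause 3
  · intro k hk j
    have hzp : ¬ Γ.Adj z0 (Xv k) := by rw [hW0]; simp [Xv, Yv, Zv]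
    have hw : (Yv j : IVert (n+1) h) ≠ Xv k := by simp [Xv, Yv]
    rw [localComp_adj_ne Γ (fun e => hw e.symm)]
    simp only [hzp, false_and, not_false_eq_true, iff_true]
    exact hXY k hk j
  -- Clause 4
  · intro j j'
    by_cases hjj : j = j'
    · subst hjj
      refine iff_of_false ((localComp Γ z0).loopless.irrefl _) ?_
      rintro (hL | ⟨b, _, hblt, _, (⟨e1, e2⟩ | ⟨e1, e2⟩)⟩)
      · exact Ledger_irrefl C _ j hL
      · exact hcolba b hblt (e1.symm.trans e2)
      · exact hcolba b hblt (e2.symm.trans e1)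
    have hyne : (Yv j : IVert (n+1) h) ≠ Yv j' := by
      simp only [Yv, ne_eq, Sum.inr.injEq, Sum.inl.injEq]
      exact hjj
    rw [localComp_adj_ne Γ hyne, hY j j']
    by_cases hpair : ((j = col b0 ∧ j' = col a) ∨ (j = col a ∧ j' = col b0))
    · -- this pair gets toggled on
      have hA : Γ.Adj z0 (Yv j) := by
        rw [hAiff]
        rcases hpair with ⟨e, _⟩ | ⟨e, _⟩
        · exact Or.inl e
        · exact Or.inr e
      have hB : Γ.Adj z0 (Yv j') := by
        rw [hAiff]
        rcases hpair with ⟨_, e⟩ | ⟨_, e⟩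
        · exact Or.inr e
        · exact Or.inl e
      have hold : ¬ (Ledger Gadj col ((a : ℕ)+1) j j' ∨
          ∃ b : Fin n, done b ∧ (b : ℕ) < (a : ℕ) ∧ Gadj a b ∧
            ((j = col b ∧ j' = col a) ∨ (j = col a ∧ j' = col b))) := by
        rintro (hL | ⟨b, hbd, hblt, hbG, hp⟩)
        · exact Ledger_succ_not_pair C a b0 hb0 hpair hL
        · -- derive b = b0
          have hbb0 : b = b0 := by
            rcases hpair with ⟨e1, e2⟩ | ⟨e1, e2⟩ <;> rcases hp with ⟨f1, f2⟩ | ⟨f1, f2⟩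
            · exact C.hcol (f1.symm.trans e1)
            · exact absurd (e1.symm.trans f1) (hcolba b0 hb0)
            · exact absurd (e2.symm.trans f2) (hcolba b0 hb0)
            · exact C.hcol (f2.symm.trans e2)
          exact hb0d (hbb0 ▸ hbd)
      constructor
      · intro _
        exact Or.inr ⟨b0, Or.inr rfl, hb0, hG0, hpair⟩
      · intro _
        exact iff_of_false hold (fun hnab => hnab ⟨hA, hB⟩)
    · -- untoggled
      have hnAB : ¬ (Γ.Adj z0 (Yv j) ∧ Γ.Adj z0 (Yv j')) := by
        rintro ⟨hA, hB⟩
        rw [hAiff] at hA hB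
        rcases hA with c | c <;> rcases hB with d | d
        · exact hjj (c.trans d.symm)
        · exact hpair (Or.inl ⟨c, d⟩)
        · exact hpair (Or.inr ⟨c, d⟩)
        · exact hjj (c.trans d.symm)
      simp only [hnAB, not_false_eq_true, iff_true]
      constructor
      · rintro (hL | ⟨b, hbd, hblt, hbG, hp⟩)
        · exact Or.inl hL
        · exact Or.inr ⟨b, Or.inl hbd, hblt, hbG, hp⟩
      · rintro (hL | ⟨b, hbd | hbb0, hblt, hbG, hp⟩)
        · exact Or.inl hL
        · exact Or.inr ⟨b, hbd, hblt, hbG, hp⟩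
        · exact absurd (hbb0 ▸ hp) (fun hc => hpair hc)
  -- Clause 5
  · intro b hb hGab w
    by_cases hbb0 : b = b0
    · subst hbb0
      rw [show Zv ra (col b) = z0 from rfl] at *
      rw [localComp_adj_self Γ z0 w]
      exact hW0 w
    have hzp : ¬ Γ.Adj z0 (Zv ra (col b)) := by
      rw [hW0]
      simp only [Zv, Yv, Sum.inr.injEq, Prod.mk.injEq, not_or]
      refine ⟨by simp, by simp, ?_⟩
      simp only [not_and]
      intro _
      exact hcolba b hb
    by_cases hw : w = Zv ra (col b)
    · subst hw
      refine iff_of_false ((localComp Γ z0).loopless.irrefl _) ?_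
      simp only [Zv, Yv, Sum.inr.injEq, Prod.mk.injEq, not_or]
      refine ⟨by simp, by simp, ?_⟩
      simp only [not_and]
      intro _
      exact hcolba b hb
    rw [localComp_adj_ne Γ (fun e => hw e.symm)]
    simp only [hzp, false_and, not_false_eq_true, iff_true]
    exact hW b hb hGab w

lemma midinv_congr {a : Fin n} {done done' : Fin n → Prop} {Γ : SimpleGraph (IVert (n+1) h)}
    (hd : ∀ b, done b ↔ done' b) (hmid : StMid Gadj col H a done Γ) :
    StMid Gadj col H a done' Γ := by
  rwa [show done' = done from (funext fun b => propext (hd b)).symm]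

lemma mid_to_inv (C : Facts Gadj col H) (a : Fin n) (Γ : SimpleGraph (IVert (n+1) h))
    (hΓ : StMid Gadj col H a (fun b => (b : ℕ) < (a : ℕ) ∧ Gadj a b) Γ) :
    StInv Gadj col H (a : ℕ) Γ := by
  obtain ⟨hZ, hXX, hXY, hY, _⟩ := hΓ
  exact ⟨hZ, hXX, hXY, fun j j' => (hY j j').trans (Ledger_succ C a j j').symm⟩

lemma inner_loop (C : Facts Gadj col H) (a : Fin n) :
    ∀ (m : ℕ) (done : Fin n → Prop) (Γ : SimpleGraph (IVert (n+1) h)),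
      {b : Fin n | ((b : ℕ) < (a : ℕ) ∧ Gadj a b) ∧ ¬ done b}.ncard ≤ m →
      (∀ b, done b → (b : ℕ) < (a : ℕ) ∧ Gadj a b) →
      StMid Gadj col H a done Γ →
      ∃ Γ', StInv Gadj col H (a : ℕ) Γ' ∧ HasVertexMinor Γ Γ' := by
  intro m
  induction m with
  | zero =>
    intro done Γ hn hsub hmid
    have hemp : {b : Fin n | ((b : ℕ) < (a : ℕ) ∧ Gadj a b) ∧ ¬ done b} = ∅ :=
      (Set.ncard_eq_zero (Set.toFinite _)).1 (Nat.le_antisymm hn (Nat.zero_le _))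
    have hiff : ∀ b, done b ↔ ((b : ℕ) < (a : ℕ) ∧ Gadj a b) := by
      intro b
      constructor
      · exact hsub b
      · intro htb
        by_contra hnd
        exact (Set.eq_empty_iff_forall_notMem.1 hemp b) ⟨htb, hnd⟩
    exact ⟨Γ, mid_to_inv C a Γ (midinv_congr hiff hmid), hvm_refl _⟩
  | succ m ih =>
    intro done Γ hn hsub hmid
    by_cases hne : {b : Fin n | ((b : ℕ) < (a : ℕ) ∧ Gadj a b) ∧ ¬ done b}.Nonempty
    · obtain ⟨b0, hb0mem⟩ := hne
      obtain ⟨⟨hb0lt, hb0G⟩, hb0d⟩ := hb0mem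
      have hmid' := lc_stage C a done Γ hmid b0 hb0d hb0lt hb0G
      have hcard : {b : Fin n | ((b : ℕ) < (a : ℕ) ∧ Gadj a b) ∧
          ¬ (done b ∨ b = b0)}.ncard ≤ m := by
        have hsubset : {b : Fin n | ((b : ℕ) < (a : ℕ) ∧ Gadj a b) ∧ ¬ (done b ∨ b = b0)} ⊆
            {b : Fin n | ((b : ℕ) < (a : ℕ) ∧ Gadj a b) ∧ ¬ done b} \ {b0} := by
          rintro b ⟨hb1, hb2⟩
          push_neg at hb2
          exact ⟨⟨hb1, hb2.1⟩, hb2.2⟩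
        have h1 : {b : Fin n | ((b : ℕ) < (a : ℕ) ∧ Gadj a b) ∧ ¬ (done b ∨ b = b0)}.ncard ≤
            ({b : Fin n | ((b : ℕ) < (a : ℕ) ∧ Gadj a b) ∧ ¬ done b} \ {b0}).ncard :=
          Set.ncard_le_ncard hsubset (Set.toFinite _)
        have h2 : ({b : Fin n | ((b : ℕ) < (a : ℕ) ∧ Gadj a b) ∧ ¬ done b} \ {b0}).ncard =
            {b : Fin n | ((b : ℕ) < (a : ℕ) ∧ Gadj a b) ∧ ¬ done b}.ncard - 1 :=
          Set.ncard_diff_singleton_of_mem ⟨⟨hb0lt, hb0G⟩, hb0d⟩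
        have h3 : 0 < {b : Fin n | ((b : ℕ) < (a : ℕ) ∧ Gadj a b) ∧ ¬ done b}.ncard :=
          Set.ncard_pos (Set.toFinite _) |>.2 ⟨b0, ⟨hb0lt, hb0G⟩, hb0d⟩
        omega
      have hsub' : ∀ b, (done b ∨ b = b0) → (b : ℕ) < (a : ℕ) ∧ Gadj a b := by
        rintro b (hbd | rfl)
        · exact hsub b hbd
        · exact ⟨hb0lt, hb0G⟩
      obtain ⟨Γ', hI, hvm⟩ := ih _ _ hcard hsub' hmid'
      exact ⟨Γ', hI, hvm_localComp _ hvm⟩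
    · rw [Set.not_nonempty_iff_eq_empty] at hne
      have hiff : ∀ b, done b ↔ ((b : ℕ) < (a : ℕ) ∧ Gadj a b) := by
        intro b
        constructor
        · exact hsub b
        · intro htb
          by_contra hnd
          exact (Set.eq_empty_iff_forall_notMem.1 hne b)
            (show ((b : ℕ) < (a : ℕ) ∧ Gadj a b) ∧ ¬ done b from ⟨htb, hnd⟩)
      exact ⟨Γ, mid_to_inv C a Γ (midinv_congr hiff hmid), hvm_refl _⟩

lemma step_lemma (C : Facts Gadj col H) (a : Fin n) (Γ : SimpleGraph (IVert (n+1) h))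
    (hΓ : StInv Gadj col H ((a : ℕ)+1) Γ) :
    ∃ Γ', StInv Gadj col H (a : ℕ) Γ' ∧ HasVertexMinor Γ Γ' := by
  have h1 := pivot_stage C a Γ hΓ
  obtain ⟨Γ', hI, hvm⟩ := inner_loop C a _ (fun _ => False)
    (pivotG Γ (Xv (Fin.castSucc a)) (Zv (Fin.castSucc a) (col a)))
    (le_refl _) (fun b hb => hb.elim) h1
  refine ⟨Γ', hI, hvm_trans ?_ hvm⟩
  exact hvm_localComp _ (hvm_localComp _ (hvm_localComp _ (hvm_refl _)))

lemma descend (C : Facts Gadj col H) :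
    ∀ (t : ℕ), t ≤ n → ∀ Γ, StInv Gadj col H t Γ →
      ∃ Γ', StInv Gadj col H 0 Γ' ∧ HasVertexMinor Γ Γ' := by
  intro t
  induction t with
  | zero => exact fun _ Γ hΓ => ⟨Γ, hΓ, hvm_refl _⟩
  | succ t ih =>
    intro ht Γ hΓ
    have hlt : t < n := by omega
    obtain ⟨Γ1, h1, hv1⟩ := step_lemma C ⟨t, hlt⟩ Γ hΓ
    obtain ⟨Γ2, h2, hv2⟩ := ih (by omega) Γ1 h1
    exact ⟨Γ2, h2, hvm_trans hv1 hv2⟩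

end LCStage
section FinalGlue

variable {n h : ℕ} {Gadj : Fin n → Fin n → Prop} {col : Fin n → Fin h}
variable {H : SimpleGraph (IVert (n+1) h)}

lemma Ledger_zero (C : Facts Gadj col H) (p q : Fin n) :
    Ledger Gadj col 0 (col p) (col q) ↔ Gadj p q := by
  constructor
  · rintro ⟨a', b', hba, _, hG, ⟨e1, e2⟩ | ⟨e1, e2⟩⟩
    · rw [C.hcol e1, C.hcol e2]; exact hG
    · rw [C.hcol e1, C.hcol e2]; exact C.hsymm _ _ hG
  · intro hG
    have hpq : p ≠ q := fun e => C.hirr p (e ▸ hG)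
    rcases Nat.lt_or_ge (q : ℕ) (p : ℕ) with hlt | hge
    · exact ⟨p, q, hlt, Nat.zero_le _, hG, Or.inl ⟨rfl, rfl⟩⟩
    · have hlt : (p : ℕ) < (q : ℕ) := by
        rcases Nat.eq_or_lt_of_le hge with heq | hlt
        · exact absurd (Fin.ext heq) hpq
        · exact hlt
      exact ⟨q, p, hlt, Nat.zero_le _, C.hsymm _ _ hG, Or.inr ⟨rfl, rfl⟩⟩

lemma base_inv (C : Facts Gadj col H) : StInv Gadj col H n H := by
  refine ⟨fun i _ j w => Iff.rfl, fun k k' _ _ => C.F5 k k', fun k _ j => C.F6 k j, ?_⟩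
  intro j j'
  exact iff_of_false (C.F7 j j') (Ledger_top C j j')

end FinalGlue
/-- **Lemma 2.3.** For every graph `G` there exist `q` and `h` such that every
interfered `K¹_{q,h}` contains `G` as a vertex-minor. -/
theorem interfered_contains_all_as_vertexMinor (W : Type) [Fintype W]
    (G : SimpleGraph W) :
    ∃ q h : ℕ, 0 < q ∧ 0 < h ∧
      ∀ H : SimpleGraph (IVert q h), IsInterfered q h H → HasVertexMinor H G := by
  classical
  set n := Fintype.card W with hndef
  set hh : ℕ := 2 ^ ((n+1) * (n+1)) * n + 1 with hhdef
  refine ⟨n+1, hh, Nat.succ_pos n, Nat.succ_pos _, ?_⟩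
  intro H hH
  set e : W ≃ Fin n := Fintype.equivFin W with hedef
  set Gadj : Fin n → Fin n → Prop := fun a b => G.Adj (e.symm a) (e.symm b) with hGadjdef
  -- pigeonhole: choose `n` columns whose interference patterns agree
  set f : Fin hh → (Fin (n+1) × Fin (n+1) → Bool) :=
    fun j p => decide (H.Adj (Xv p.2) (Zv p.1 j)) with hfdef
  have hcardlt : Fintype.card (Fin (n+1) × Fin (n+1) → Bool) * n < Fintype.card (Fin hh) := by
    simp only [Fintype.card_fun, Fintype.card_prod, Fintype.card_fin, Fintype.card_bool,
      Fintype.card_fin]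
    omega
  obtain ⟨y, hy⟩ := Fintype.exists_lt_card_fiber_of_mul_lt_card f hcardlt
  obtain ⟨s, hst, hscard⟩ := Finset.exists_subset_card_eq (le_of_lt hy)
  set col : Fin n → Fin hh := fun b => s.orderEmbOfFin hscard b with hcoldef
  have hcolinj : Function.Injective col := fun b b' hbb =>
    (s.orderEmbOfFin hscard).injective hbb
  have hmem : ∀ b : Fin n, f (col b) = y := by
    intro b
    have hmem2 := hst (s.orderEmbOfFin_mem hscard b)
    exact (Finset.mem_filter.1 hmem2).2
  have huni : ∀ (i k : Fin (n+1)) (b b' : Fin n),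
      H.Adj (Xv k) (Zv i (col b)) ↔ H.Adj (Xv k) (Zv i (col b')) := by
    intro i k b b'
    have h1 : f (col b) (i, k) = f (col b') (i, k) := by
      rw [hmem b, hmem b']
    exact decide_eq_decide.mp h1
  have hsymm : ∀ a b, Gadj a b → Gadj b a := fun a b hab => hab.symm
  have hirr : ∀ a, ¬ Gadj a a := fun a ha => G.loopless.irrefl _ ha
  have C : Facts Gadj col H := Facts.of_interfered hsymm hirr hcolinj huni hH
  obtain ⟨Γ0, hInv0, hvm0⟩ := descend C n (le_refl n) H (base_inv C)
  refine hvm_trans hvm0 ?_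
  -- delete everything but the chosen `y` vertices, and read off `G`
  set S : Set (IVert (n+1) hh) := {w | ∃ a : Fin n, w = Yv (col a)} with hSdef
  have hbij : Function.Bijective
      (fun x : W => (⟨Yv (col (e x)), ⟨e x, rfl⟩⟩ : ↑S)) := by
    constructor
    · intro x y hxy
      have h2 := congrArg Subtype.val hxy
      simp only [Yv, Sum.inr.injEq, Sum.inl.injEq] at h2
      exact e.injective (hcolinj h2)
    · rintro ⟨w, ⟨a, rfl⟩⟩
      refine ⟨e.symm a, ?_⟩
      apply Subtype.ext
      simp
  have iso2 : G ≃g (Γ0.induce S) := by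
    refine ⟨Equiv.ofBijective _ hbij, ?_⟩
    intro x y
    show Γ0.Adj (Yv (col (e x))) (Yv (col (e y))) ↔ G.Adj x y
    rw [hInv0.2.2.2 (col (e x)) (col (e y)), Ledger_zero C (e x) (e y)]
    simp only [hGadjdef, Equiv.symm_apply_apply]
  exact hvm_induce (Sᶜ.ncard) Γ0 S (le_refl _) (hvm_iso_only iso2.symm)
end MainConstruction
end

section
/- Let G be a connected graph and let T be a maximal induced bloated tree of G (maximal with respect to vertex inclusion among induced subgraphs of G that are bloated trees). If u and v are adjacent vertices that both have degree two in T, and both u and v are cut vertices of G, then the edge uv is a bridge of G. -/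
open SimpleGraph

/-! ### Auxiliary machinery for Lemma 3.3 -/

section BridgeAux

variable {V : Type*} {G : SimpleGraph V}

/-- Reachability avoiding a vertex. -/
def RA (G : SimpleGraph V) (x a b : V) : Prop := ∃ p : G.Walk a b, x ∉ p.support

lemma RA.refl {x a : V} (h : a ≠ x) : RA G x a a := ⟨Walk.nil, by simpa using h.symm⟩

lemma RA.symm {x a b : V} (h : RA G x a b) : RA G x b a := by
  obtain ⟨p, hp⟩ := h
  exact ⟨p.reverse, by simpa using hp⟩

lemma RA.trans {x a b c : V} (h : RA G x a b) (h' : RA G x b c) : RA G x a c := by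
  obtain ⟨p, hp⟩ := h; obtain ⟨q, hq⟩ := h'
  refine ⟨p.append q, ?_⟩
  rw [Walk.support_append, List.mem_append]
  rintro (h | h)
  · exact hp h
  · exact hq (List.mem_of_mem_tail h)

lemma RA.of_adj {x a b : V} (h : G.Adj a b) (ha : a ≠ x) (hb : b ≠ x) : RA G x a b := by
  refine ⟨Walk.cons h Walk.nil, ?_⟩
  simp [ha.symm, hb.symm, Walk.support_cons]

lemma RA.ne_left {x a b : V} (h : RA G x a b) : a ≠ x := by
  obtain ⟨p, hp⟩ := h; rintro rfl; exact hp p.start_mem_support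

lemma RA.ne_right {x a b : V} (h : RA G x a b) : b ≠ x := by
  obtain ⟨p, hp⟩ := h; rintro rfl; exact hp p.end_mem_support

lemma exists_walk_induce {S : Set V} :
    ∀ {a b : V} (p : G.Walk a b), (∀ x ∈ p.support, x ∈ S) →
      ∀ (ha : a ∈ S) (hb : b ∈ S),
      ∃ q : (G.induce S).Walk ⟨a, ha⟩ ⟨b, hb⟩,
        q.map (SimpleGraph.Embedding.induce S).toHom = p := by
  intro a b p
  induction p with
  | nil => intro _ ha hb; exact ⟨Walk.nil, rfl⟩
  | cons h p ih =>
    rename_i x y z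
    intro hs ha hb
    have hy : y ∈ S := hs _ (by simp)
    obtain ⟨q, hq⟩ := ih (fun t ht => hs t (by simp [ht])) hy hb
    refine ⟨Walk.cons (by simpa using h) q, ?_⟩
    simp [hq]

/-- `RA` matches reachability in the induced subgraph on the complement of `x`. -/
lemma RA_iff_induce {x a b : V} (ha : a ≠ x) (hb : b ≠ x) :
    RA G x a b ↔ (G.induce {w | w ≠ x}).Reachable ⟨a, ha⟩ ⟨b, hb⟩ := by
  constructor
  · rintro ⟨p, hp⟩
    have hsupp : ∀ y ∈ p.support, y ∈ {w | w ≠ x} := fun y hy => by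
      intro hyx; exact hp (hyx ▸ hy)
    obtain ⟨q, -⟩ := exists_walk_induce p hsupp ha hb
    exact ⟨q⟩
  · rintro ⟨q⟩
    refine ⟨q.map (SimpleGraph.Embedding.induce _).toHom, ?_⟩
    change x ∉ (q.map (SimpleGraph.Embedding.induce _).toHom).support
    rw [Walk.support_map]
    rintro hmem
    obtain ⟨⟨y, hy⟩, -, h⟩ := List.mem_map.mp hmem
    exact hy h

/-- From a walk `a → u` with `a ≠ u`, extract a neighbour `w` of `u` together with
a walk `a → w` avoiding `u` whose support lies in that of `p`. -/
lemma exists_adj_avoid_strong : ∀ {a u : V} (p : G.Walk a u), a ≠ u →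
    ∃ (w : V) (q : G.Walk a w), G.Adj w u ∧ u ∉ q.support ∧
      ∀ x ∈ q.support, x ∈ p.support := by
  intro a u p
  induction p with
  | nil => intro h; exact absurd rfl h
  | cons h p ih =>
    rename_i x y z
    intro hxz
    by_cases hy : y = z
    · subst hy
      refine ⟨x, Walk.nil, h, by simpa using hxz.symm, ?_⟩
      intro t ht
      simp only [Walk.support_nil, List.mem_singleton] at ht
      simp [ht]
    · obtain ⟨w, q, hadj, hus, hsub⟩ := ih hy
      refine ⟨w, Walk.cons h q, hadj, ?_, ?_⟩
      · rw [Walk.support_cons]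
        intro hmem
        rcases List.mem_cons.mp hmem with rfl | hmem
        · exact hxz rfl
        · exact hus hmem
      · intro t ht
        rw [Walk.support_cons] at ht ⊢
        rcases List.mem_cons.mp ht with rfl | ht
        · exact List.mem_cons_self
        · exact List.mem_cons_of_mem _ (hsub t ht)

lemma exists_adj_avoid {a u : V} (p : G.Walk a u) (h : a ≠ u) :
    ∃ w, G.Adj w u ∧ RA G u a w := by
  obtain ⟨w, q, hadj, hus, -⟩ := exists_adj_avoid_strong p h
  exact ⟨w, hadj, q, hus⟩

variable {X : SimpleGraph V}

lemma bigCliqueRel_reachable {x y : V} (h : bigCliqueRel X x y) : X.Reachable x y := by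
  rcases h with rfl | ⟨s, hs, hx, hy⟩
  · rfl
  · by_cases hxy : x = y
    · subst hxy; rfl
    · exact (hs.1 hx hy hxy).reachable

lemma eqvGen_reachable {x y : V} (h : Relation.EqvGen (bigCliqueRel X) x y) :
    X.Reachable x y := by
  induction h with
  | rel _ _ h => exact bigCliqueRel_reachable h
  | refl => rfl
  | symm _ _ _ ih => exact ih.symm
  | trans _ _ _ _ _ ih ih' => exact ih.trans ih'

lemma quot_mk_eq_iff {x y : V} :
    Quot.mk (bigCliqueRel X) x = Quot.mk (bigCliqueRel X) y ↔
      Relation.EqvGen (bigCliqueRel X) x y := by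
  exact ⟨Quot.eqvGen_exact, Quot.eqvGen_sound⟩

lemma connected_of_contract (h : (contractBigCliques X).Connected) : X.Connected := by
  have hne : Nonempty V := by
    obtain ⟨q⟩ := h.nonempty
    obtain ⟨x, -⟩ := q.exists_rep
    exact ⟨x⟩
  rw [connected_iff]
  refine ⟨fun x y => ?_, hne⟩
  have hreach : ∀ (a b : Quot (bigCliqueRel X)) (w : (contractBigCliques X).Walk a b)
      (x y : V), Quot.mk _ x = a → Quot.mk _ y = b → X.Reachable x y := by
    intro a b w
    induction w with
    | nil =>
      intro x y hx hy
      exact eqvGen_reachable (quot_mk_eq_iff.mp (hx.trans hy.symm))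
    | cons h w ih =>
      rename_i c d e
      intro x y hx hy
      obtain ⟨-, u, v, huv, hu, hv⟩ := h
      have h1 : X.Reachable x u := eqvGen_reachable (quot_mk_eq_iff.mp (hx.trans hu.symm))
      exact (h1.trans huv.reachable).trans (ih v y hv hy)
  obtain ⟨w⟩ := h.preconnected (Quot.mk _ x) (Quot.mk _ y)
  exact hreach _ _ w x y rfl rfl

lemma contract_connected (h : X.Connected) : (contractBigCliques X).Connected := by
  have hne : Nonempty (Quot (bigCliqueRel X)) := ⟨Quot.mk _ h.nonempty.some⟩
  rw [connected_iff]
  refine ⟨fun a b => ?_, hne⟩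
  obtain ⟨x, rfl⟩ := a.exists_rep
  obtain ⟨y, rfl⟩ := b.exists_rep
  obtain ⟨w⟩ := h.preconnected x y
  clear h
  induction w with
  | nil => rfl
  | cons hadj w ih =>
    rename_i c d e
    refine Reachable.trans ?_ ih
    by_cases hq : Quot.mk (bigCliqueRel X) c = Quot.mk (bigCliqueRel X) d
    · rw [hq]
    · exact Adj.reachable ⟨hq, c, d, hadj, rfl, rfl⟩

variable {V : Type*} {G : SimpleGraph V} {S : Set V}

/-- A big clique of `G.induce S`, expressed at the level of `V`. -/
def BigIn (G : SimpleGraph V) (S : Set V) (s : Finset V) : Prop :=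
  ↑s ⊆ S ∧ G.IsClique ↑s ∧ 3 ≤ s.card ∧
    ∀ t : Finset V, ↑t ⊆ S → G.IsClique ↑t → s ⊆ t → t = s

lemma exists_finset_subtype (t : Finset V) (ht : ↑t ⊆ S) :
    ∃ t' : Finset S, t'.map (Function.Embedding.subtype (· ∈ S)) = t := by
  classical
  refine ⟨t.subtype _, ?_⟩
  rw [Finset.subtype_map]
  exact Finset.filter_true_of_mem fun x hx => ht hx

lemma coe_map_subtype (s' : Finset S) :
    (↑(s'.map (Function.Embedding.subtype (· ∈ S))) : Set V) = Subtype.val '' (↑s' : Set S) := by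
  ext x; simp

lemma isClique_induce_iff (s' : Finset S) :
    (G.induce S).IsClique ↑s' ↔ G.IsClique ↑(s'.map (Function.Embedding.subtype (· ∈ S))) := by
  rw [coe_map_subtype]
  constructor
  · intro h a ha b hb hab
    obtain ⟨a', ha', rfl⟩ := ha
    obtain ⟨b', hb', rfl⟩ := hb
    have := h ha' hb' (fun hc => hab (by rw [hc]))
    simpa using this
  · intro h a ha b hb hab
    have := h (Set.mem_image_of_mem _ ha) (Set.mem_image_of_mem _ hb)
      (fun hc => hab (Subtype.val_injective hc))
    simpa using this

lemma bigIn_of_isBigClique {s' : Finset S} (h : IsBigClique (G.induce S) s') :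
    BigIn G S (s'.map (Function.Embedding.subtype (· ∈ S))) := by
  obtain ⟨hcl, hcard, hmax⟩ := h
  refine ⟨?_, (isClique_induce_iff s').mp hcl, by simpa using hcard, ?_⟩
  · intro x hx
    rw [Finset.coe_map] at hx
    obtain ⟨⟨y, hy⟩, -, rfl⟩ := hx
    exact hy
  · intro t htS htcl hsub
    obtain ⟨t', rfl⟩ := exists_finset_subtype t htS
    have h1 : s' ⊆ t' := by
      intro x hx
      have : (Function.Embedding.subtype (· ∈ S)) x ∈ t'.map _ :=
        hsub (Finset.mem_map_of_mem _ hx)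
      simpa using this
    have := hmax t' ((isClique_induce_iff t').mpr htcl) h1
    rw [this]

lemma isBigClique_of_bigIn {q : Finset V} (h : BigIn G S q) :
    ∃ s' : Finset S, IsBigClique (G.induce S) s' ∧
      s'.map (Function.Embedding.subtype (· ∈ S)) = q := by
  obtain ⟨hS, hcl, hcard, hmax⟩ := h
  obtain ⟨s', rfl⟩ := exists_finset_subtype q hS
  refine ⟨s', ⟨(isClique_induce_iff s').mpr hcl, by simpa using hcard, ?_⟩, rfl⟩
  intro t' ht' hsub
  have := hmax (t'.map _) (by
      intro x hx
      rw [Finset.coe_map] at hx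
      obtain ⟨⟨y, hy⟩, -, rfl⟩ := hx
      exact hy)
    ((isClique_induce_iff t').mp ht') (Finset.map_subset_map.mpr hsub)
  exact Finset.map_injective _ this

lemma mem_map_subtype_iff {s' : Finset S} {x : S} :
    x.1 ∈ s'.map (Function.Embedding.subtype (· ∈ S)) ↔ x ∈ s' := by
  simp

lemma ncard_neighborSet_induce (x : S) :
    ((G.induce S).neighborSet x).ncard = {t | t ∈ S ∧ G.Adj x.1 t}.ncard := by
  have himg : Subtype.val '' ((G.induce S).neighborSet x) = {t | t ∈ S ∧ G.Adj x.1 t} := by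
    ext t
    constructor
    · rintro ⟨⟨y, hy⟩, hmem, rfl⟩
      exact ⟨hy, by simpa [neighborSet] using hmem⟩
    · rintro ⟨ht, hadj⟩
      exact ⟨⟨t, ht⟩, by simpa [neighborSet] using hadj, rfl⟩
  rw [← himg, Set.ncard_image_of_injective _ Subtype.val_injective]

variable {α : Type*} {X : SimpleGraph α}

/-- Decompose a cycle based at `K` into its two `K`-neighbours and a middle path
avoiding `K`. -/
lemma cycle_decomp {K : α} (c : X.Walk K K) (hc : c.IsCycle) :
    ∃ (a b : α) (d : X.Walk a b), X.Adj K a ∧ X.Adj b K ∧ a ≠ b ∧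
      K ∉ d.support ∧ d.IsPath := by
  cases c with
  | nil => exact absurd rfl hc.ne_nil
  | cons h q =>
    rename_i y
    have hqnodup : q.support.Nodup := by
      have := hc.support_nodup
      simpa using this
    have hKy : K ≠ y := h.ne
    obtain ⟨m, h', q'', hq''⟩ := Walk.exists_eq_cons_of_ne hKy q.reverse
    have hsupp : q.support.reverse = K :: q''.support := by
      rw [← Walk.support_reverse, hq'', Walk.support_cons]
    have hrevnodup : (K :: q''.support).Nodup := by
      rw [← hsupp, List.nodup_reverse]; exact hqnodup
    have hKnot : K ∉ q''.support := (List.nodup_cons.mp hrevnodup).1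
    have hq''nodup : q''.support.Nodup := (List.nodup_cons.mp hrevnodup).2
    refine ⟨y, m, q''.reverse, h, h'.symm, ?_, ?_, ?_⟩
    · -- y ≠ m
      intro hym
      subst hym
      have hpath : q''.reverse.IsPath := Walk.IsPath.mk' (by
        rw [Walk.support_reverse, List.nodup_reverse]; exact hq''nodup)
      have : q''.reverse = Walk.nil := Walk.isPath_iff_eq_nil.mp hpath
      have hq''nil : q'' = Walk.nil := by
        have := congrArg Walk.reverse this
        simpa using this
      subst hq''nil
      have hlen : q.reverse.length = 1 := by rw [hq'']; simp
      have : q.length = 1 := by rwa [Walk.length_reverse] at hlen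
      have h3 := hc.three_le_length
      simp [this] at h3
    · rw [Walk.support_reverse, List.mem_reverse]; exact hKnot
    · exact Walk.IsPath.mk' (by rw [Walk.support_reverse, List.nodup_reverse]; exact hq''nodup)

variable {α β : Type*} {X : SimpleGraph α} {Y : SimpleGraph β}

lemma no_cycle_avoiding (hY : Y.IsAcyclic) (K : α) (f : α → β)
    (hinj : ∀ a b, a ≠ K → b ≠ K → f a = f b → a = b)
    (hhom : ∀ a b, a ≠ K → b ≠ K → X.Adj a b → Y.Adj (f a) (f b))
    {z : α} (c : X.Walk z z) (hc : c.IsCycle) (hK : K ∉ c.support) : False := by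
  have hz : z ∈ {x | x ≠ K} := fun h => hK (h ▸ c.start_mem_support)
  obtain ⟨q, hq⟩ := exists_walk_induce (S := {x | x ≠ K}) c
    (fun x hx hxK => hK (hxK ▸ hx)) hz hz
  have hvalinj : Function.Injective ((SimpleGraph.Embedding.induce (G := X) {x | x ≠ K}).toHom :
      {x | x ≠ K} → α) := Subtype.val_injective
  have hqc : q.IsCycle := by
    rw [← Walk.map_isCycle_iff_of_injective hvalinj, hq]; exact hc
  let Ψ : X.induce {x | x ≠ K} →g Y :=
    ⟨fun x => f x.1, fun {a b} h => hhom _ _ a.2 b.2 h⟩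
  have hΨinj : Function.Injective Ψ := by
    intro a b h
    exact Subtype.ext (hinj _ _ a.2 b.2 h)
  exact hY (q.map Ψ) (hqc.map hΨinj)

lemma no_cycle_through (hY : Y.IsAcyclic) (K : α) (f : α → β) (u₁ v₁ : β)
    (hinj : ∀ a b, a ≠ K → b ≠ K → f a = f b → a = b)
    (hhom : ∀ a b, a ≠ K → b ≠ K → X.Adj a b → Y.Adj (f a) (f b))
    (hfu : ∀ a, a ≠ K → f a ≠ u₁ ∧ f a ≠ v₁)
    (huv : Y.Adj u₁ v₁)
    (hnbr : ∀ a, a ≠ K → X.Adj K a → Y.Adj u₁ (f a) ∨ Y.Adj v₁ (f a))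
    (c : X.Walk K K) (hc : c.IsCycle) : False := by
  obtain ⟨a, b, d, hKa, hbK, hab, hKd, hdp⟩ := cycle_decomp c hc
  have ha : a ≠ K := hKa.ne'
  have hb : b ≠ K := hbK.ne
  have hra := hnbr a ha hKa
  have hrb := hnbr b hb hbK.symm
  -- the mapped middle path
  have hda : a ∈ {x | x ≠ K} := ha
  have hdb : b ∈ {x | x ≠ K} := hb
  obtain ⟨q, hq⟩ := exists_walk_induce (S := {x | x ≠ K}) d
    (fun x hx hxK => hKd (hxK ▸ hx)) hda hdb
  let Ψ : X.induce {x | x ≠ K} →g Y :=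
    ⟨fun x => f x.1, fun {x y} h => hhom _ _ x.2 y.2 h⟩
  have hΨinj : Function.Injective Ψ := fun x y h => Subtype.ext (hinj _ _ x.2 y.2 h)
  have hqp : q.IsPath := by
    apply Walk.IsPath.of_map (f := (SimpleGraph.Embedding.induce {x | x ≠ K}).toHom)
    rw [hq]; exact hdp
  let p := q.map Ψ
  have hpp : p.IsPath := Walk.map_isPath_of_injective hΨinj hqp
  have hpsupp : ∀ x ∈ p.support, x ≠ u₁ ∧ x ≠ v₁ := by
    intro x hx
    rw [Walk.support_map] at hx
    obtain ⟨y, -, rfl⟩ := List.mem_map.mp hx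
    exact hfu y.1 y.2
  have hfa : f a ≠ u₁ ∧ f a ≠ v₁ := hfu a ha
  have hfb : f b ≠ u₁ ∧ f b ≠ v₁ := hfu b hb
  have hfab : f a ≠ f b := fun h => hab (hinj _ _ ha hb h)
  -- p : Y.Walk (f a) (f b)
  have hp : p = q.map Ψ := rfl
  -- case split
  rcases hra with hra | hra <;> rcases hrb with hrb | hrb
  · -- both attach to u₁
    have hcyc : (Walk.cons hra (p.concat hrb.symm)).IsCycle := by
      rw [Walk.cons_isCycle_iff]
      constructor
      · apply Walk.IsPath.mk'
        rw [Walk.support_concat, List.nodup_append]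
        refine ⟨hpp.support_nodup, List.nodup_singleton _, ?_⟩
        intro x hx
        simp only [List.mem_singleton]
        rintro b rfl rfl
        exact (hpsupp _ hx).1 rfl
      · rw [Walk.edges_concat, List.concat_eq_append, List.mem_append]
        rintro (hmem | hmem)
        · exact (hpsupp _ (Walk.fst_mem_support_of_mem_edges p hmem)).1 rfl
        · rw [List.mem_singleton, Sym2.eq_iff] at hmem
          rcases hmem with ⟨h1, h2⟩ | ⟨h1, h2⟩
          · exact hfb.1 (h1.symm)
          · exact hfab h2
    exact hY _ hcyc
  · -- u₁ to f a, v₁ to f b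
    exact absurd hc (by
      have hcyc : (Walk.cons hra ((p.concat hrb.symm).concat huv.symm)).IsCycle := by
        rw [Walk.cons_isCycle_iff]
        have hu1v1 : u₁ ≠ v₁ := huv.ne
        constructor
        · apply Walk.IsPath.mk'
          rw [Walk.support_concat, Walk.support_concat,
            List.append_assoc, List.nodup_append]
          refine ⟨hpp.support_nodup, ?_, ?_⟩
          · simp [hu1v1.symm]
          · intro x hx
            simp only [List.mem_append, List.mem_singleton]
            rintro b (rfl | rfl) rfl
            · exact (hpsupp _ hx).2 rfl
            · exact (hpsupp _ hx).1 rfl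
        · rw [Walk.edges_concat, Walk.edges_concat, List.concat_eq_append,
            List.concat_eq_append, List.append_assoc, List.mem_append, List.mem_append]
          rintro (hmem | hmem | hmem)
          · exact (hpsupp _ (Walk.fst_mem_support_of_mem_edges p hmem)).1 rfl
          · rw [List.mem_singleton, Sym2.eq_iff] at hmem
            rcases hmem with ⟨h1, h2⟩ | ⟨h1, h2⟩
            · exact hfb.1 h1.symm
            · exact huv.ne h1
          · rw [List.mem_singleton, Sym2.eq_iff] at hmem
            rcases hmem with ⟨h1, h2⟩ | ⟨h1, h2⟩
            · exact huv.ne h1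
            · exact hfa.2 h2
      exact fun _ => hY _ hcyc)
  · -- v₁ to f a, u₁ to f b : symmetric
    have hcyc : (Walk.cons hra ((p.concat hrb.symm).concat huv)).IsCycle := by
      rw [Walk.cons_isCycle_iff]
      have hu1v1 : u₁ ≠ v₁ := huv.ne
      constructor
      · apply Walk.IsPath.mk'
        rw [Walk.support_concat, Walk.support_concat,
          List.append_assoc, List.nodup_append]
        refine ⟨hpp.support_nodup, ?_, ?_⟩
        · simp [hu1v1]
        · intro x hx
          simp only [List.mem_append, List.mem_singleton]
          rintro b (rfl | rfl) rfl
          · exact (hpsupp _ hx).1 rfl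
          · exact (hpsupp _ hx).2 rfl
      · rw [Walk.edges_concat, Walk.edges_concat, List.concat_eq_append,
          List.concat_eq_append, List.append_assoc, List.mem_append, List.mem_append]
        rintro (hmem | hmem | hmem)
        · exact (hpsupp _ (Walk.fst_mem_support_of_mem_edges p hmem)).2 rfl
        · rw [List.mem_singleton, Sym2.eq_iff] at hmem
          rcases hmem with ⟨h1, h2⟩ | ⟨h1, h2⟩
          · exact hfb.2 h1.symm
          · exact huv.ne h1.symm
        · rw [List.mem_singleton, Sym2.eq_iff] at hmem
          rcases hmem with ⟨h1, h2⟩ | ⟨h1, h2⟩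
          · exact huv.ne h1.symm
          · exact hfa.1 h2
    exact hY _ hcyc
  · -- both attach to v₁
    have hcyc : (Walk.cons hra (p.concat hrb.symm)).IsCycle := by
      rw [Walk.cons_isCycle_iff]
      constructor
      · apply Walk.IsPath.mk'
        rw [Walk.support_concat, List.nodup_append]
        refine ⟨hpp.support_nodup, List.nodup_singleton _, ?_⟩
        intro x hx
        simp only [List.mem_singleton]
        rintro b rfl rfl
        exact (hpsupp _ hx).2 rfl
      · rw [Walk.edges_concat, List.concat_eq_append, List.mem_append]
        rintro (hmem | hmem)
        · exact (hpsupp _ (Walk.fst_mem_support_of_mem_edges p hmem)).2 rfl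
        · rw [List.mem_singleton, Sym2.eq_iff] at hmem
          rcases hmem with ⟨h1, h2⟩ | ⟨h1, h2⟩
          · exact hfb.2 h1.symm
          · exact hfab h2
    exact hY _ hcyc

lemma eqvGen_lift {A B : Type*} {r : A → A → Prop} {r' : B → B → Prop} (f : A → B)
    (h : ∀ a b, r a b → Relation.EqvGen r' (f a) (f b)) {a b : A}
    (he : Relation.EqvGen r a b) : Relation.EqvGen r' (f a) (f b) := by
  induction he with
  | rel _ _ hr => exact h _ _ hr
  | refl => exact Relation.EqvGen.refl _
  | symm _ _ _ ih => exact ih.symm _ _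
  | trans _ _ _ _ _ ih ih' => exact ih.trans _ _ _ ih'

lemma eqvGen_invar {A : Type*} {r : A → A → Prop} (P : A → Prop)
    (h : ∀ a b, r a b → (P a ↔ P b)) {a b : A}
    (he : Relation.EqvGen r a b) : P a ↔ P b := by
  induction he with
  | rel _ _ hr => exact h _ _ hr
  | refl => exact Iff.rfl
  | symm _ _ _ ih => exact ih.symm
  | trans _ _ _ _ _ ih ih' => exact ih.trans ih'

/-- Transfer `RA` from an induced subgraph to the ambient graph. -/
lemma RA_of_induce {S : Set V} {x a b : V} {hx : x ∈ S} {ha : a ∈ S} {hb : b ∈ S}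
    (h : RA (G.induce S) ⟨x, hx⟩ ⟨a, ha⟩ ⟨b, hb⟩) : RA G x a b := by
  obtain ⟨p, hp⟩ := h
  refine ⟨p.map (SimpleGraph.Embedding.induce S).toHom, ?_⟩
  change x ∉ (p.map (SimpleGraph.Embedding.induce S).toHom).support
  rw [Walk.support_map]
  intro hmem
  obtain ⟨y, hy, hyx⟩ := List.mem_map.mp hmem
  apply hp
  have : (⟨x, hx⟩ : S) = y := Subtype.ext hyx.symm
  rw [this]
  exact hy

section Pendant

variable {V : Type*} [Fintype V] {G : SimpleGraph V} {T : Set V} {w u₀ : V}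

lemma pendant_bigIn (hw : w ∉ T) (hnbr : ∀ t ∈ T, G.Adj t w → t = u₀) (s : Finset V) :
    BigIn G (insert w T) s ↔ BigIn G T s := by
  classical
  constructor
  · rintro ⟨hsub, hcl, hcard, hmax⟩
    have hws : w ∉ s := by
      intro hws
      have hsub2 : s ⊆ ({u₀, w} : Finset V) := by
        intro x hx
        by_cases hxw : x = w
        · simp [hxw]
        · have hxT : x ∈ T := (Set.mem_insert_iff.mp (hsub hx)).resolve_left hxw
          have hadj : G.Adj x w := hcl hx (Finset.mem_coe.mpr hws) hxw
          simp [hnbr x hxT hadj]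
      have h2 : s.card ≤ 2 := le_trans (Finset.card_le_card hsub2)
        (le_trans (Finset.card_insert_le _ _) (by simp))
      omega
    have hsubT : ↑s ⊆ T := fun x hx =>
      (Set.mem_insert_iff.mp (hsub hx)).resolve_left
        (fun h => hws (Finset.mem_coe.mp (h ▸ hx)))
    refine ⟨hsubT, hcl, hcard, fun t ht hcl' hsub' =>
      hmax t (ht.trans (Set.subset_insert _ _)) hcl' hsub'⟩
  · rintro ⟨hsub, hcl, hcard, hmax⟩
    refine ⟨hsub.trans (Set.subset_insert _ _), hcl, hcard, ?_⟩
    intro t ht hcl' hsub'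
    have hwt : w ∉ t := by
      intro hwt
      obtain ⟨a, ha, b, hb, hab⟩ := Finset.one_lt_card.mp (by omega : 1 < s.card)
      have haT : a ∈ T := hsub ha
      have hbT : b ∈ T := hsub hb
      have haw : a ≠ w := fun h => hw (h ▸ haT)
      have hbw : b ≠ w := fun h => hw (h ▸ hbT)
      have ha' : a = u₀ := hnbr a haT (hcl' (Finset.mem_coe.mpr (hsub' ha)) (Finset.mem_coe.mpr hwt) haw)
      have hb' : b = u₀ := hnbr b hbT (hcl' (Finset.mem_coe.mpr (hsub' hb)) (Finset.mem_coe.mpr hwt) hbw)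
      exact hab (ha'.trans hb'.symm)
    have htT : ↑t ⊆ T := fun x hx =>
      (Set.mem_insert_iff.mp (ht hx)).resolve_left (fun h => hwt (by exact h ▸ (Finset.mem_coe.mp hx)))
    exact hmax t htT hcl' hsub'

lemma pendant_bloated (hw : w ∉ T) (hu : u₀ ∈ T) (hadj : G.Adj u₀ w)
    (hnbr : ∀ t ∈ T, G.Adj t w → t = u₀)
    (hdeg : {t | t ∈ T ∧ G.Adj u₀ t}.ncard ≤ 2)
    (hT : IsBloatedTree (G.induce T)) :
    IsBloatedTree (G.induce (insert w T)) := by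
  classical
  obtain ⟨hT1, hT2, hT3⟩ := hT
  set T' := insert w T with hT'def
  have hsubTT' : T ⊆ T' := Set.subset_insert w T
  have hbig' : ∀ s' : Finset T', IsBigClique (G.induce T') s' →
      BigIn G T (s'.map (Function.Embedding.subtype (· ∈ T'))) := by
    intro s' h
    exact (pendant_bigIn hw hnbr _).mp (bigIn_of_isBigClique h)
  have hback : ∀ s' : Finset T', IsBigClique (G.induce T') s' →
      ∃ s₂ : Finset T, IsBigClique (G.induce T) s₂ ∧ s₂.card = s'.card ∧
        ∀ x : T', (x ∈ s' ↔ ∃ hx : x.1 ∈ T, (⟨x.1, hx⟩ : T) ∈ s₂) := by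
    intro s' h
    obtain ⟨s₂, hbig₂, hmap₂⟩ := isBigClique_of_bigIn (hbig' s' h)
    refine ⟨s₂, hbig₂, ?_, fun x => ?_⟩
    · have := congrArg Finset.card hmap₂
      simpa using this
    constructor
    · intro hx
      have hxV : x.1 ∈ s'.map (Function.Embedding.subtype (· ∈ T')) :=
        mem_map_subtype_iff.mpr hx
      rw [← hmap₂] at hxV
      obtain ⟨y, hy, hyx⟩ := Finset.mem_map.mp hxV
      refine ⟨hyx ▸ y.2, ?_⟩
      have : (⟨x.1, hyx ▸ y.2⟩ : T) = y := Subtype.ext hyx.symm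
      rw [this]; exact hy
    · rintro ⟨hxT, hmem⟩
      have hxV : x.1 ∈ s₂.map (Function.Embedding.subtype (· ∈ T)) :=
        Finset.mem_map.mpr ⟨⟨x.1, hxT⟩, hmem, rfl⟩
      rw [hmap₂] at hxV
      exact mem_map_subtype_iff.mp hxV
  refine ⟨?_, ?_, ?_⟩
  · -- every edge in at most one big clique
    intro a b hab s t hs ht has hbs hat hbt
    obtain ⟨s₂, hs₂, -, hmems⟩ := hback s hs
    obtain ⟨t₂, ht₂, -, hmemt⟩ := hback t ht
    obtain ⟨haT, has₂⟩ := (hmems a).mp has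
    obtain ⟨hbT, hbs₂⟩ := (hmems b).mp hbs
    obtain ⟨haT', hat₂⟩ := (hmemt a).mp hat
    obtain ⟨hbT', hbt₂⟩ := (hmemt b).mp hbt
    have hadj₂ : (G.induce T).Adj ⟨a.1, haT⟩ ⟨b.1, hbT⟩ := hab
    have heq := hT1 _ _ hadj₂ s₂ t₂ hs₂ ht₂ has₂ hbs₂ hat₂ hbt₂
    apply Finset.ext; intro x
    rw [hmems x, hmemt x, heq]
  · -- degrees
    intro s hs x hx
    have hBig := hbig' s hs
    have hxT : x.1 ∈ T := hBig.1 (mem_map_subtype_iff.mpr hx)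
    have h3 : 3 ≤ s.card := by
      have := hBig.2.2.1; simpa using this
    rw [ncard_neighborSet_induce]
    by_cases hxu : x.1 = u₀
    · have hset : {t | t ∈ T' ∧ G.Adj x.1 t} = insert w {t | t ∈ T ∧ G.Adj x.1 t} := by
        ext t
        simp only [Set.mem_insert_iff, Set.mem_setOf_eq, hT'def]
        constructor
        · rintro ⟨(rfl | htT), hadj'⟩
          · exact Or.inl rfl
          · exact Or.inr ⟨htT, hadj'⟩
        · rintro (rfl | ⟨htT, hadj'⟩)
          · exact ⟨Or.inl rfl, hxu ▸ hadj⟩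
          · exact ⟨Or.inr htT, hadj'⟩
      rw [hset, Set.ncard_insert_of_notMem (fun h => hw h.1) (Set.toFinite _)]
      have h2 : {t | t ∈ T ∧ G.Adj x.1 t}.ncard ≤ 2 := by rw [hxu]; exact hdeg
      omega
    · have hset : {t | t ∈ T' ∧ G.Adj x.1 t} = {t | t ∈ T ∧ G.Adj x.1 t} := by
        ext t
        simp only [Set.mem_setOf_eq, hT'def, Set.mem_insert_iff]
        constructor
        · rintro ⟨(rfl | htT), hadj'⟩
          · exact absurd (hnbr x.1 hxT hadj') hxu
          · exact ⟨htT, hadj'⟩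
        · rintro ⟨htT, hadj'⟩; exact ⟨Or.inr htT, hadj'⟩
      rw [hset]
      obtain ⟨s₂, hs₂, hcard₂, hmems⟩ := hback s hs
      obtain ⟨hxT₂, hxs₂⟩ := (hmems x).mp hx
      have hdx := hT2 s₂ hs₂ ⟨x.1, hxT₂⟩ hxs₂
      rw [ncard_neighborSet_induce] at hdx
      have hdx' : {t | t ∈ T ∧ G.Adj x.1 t}.ncard ≤ s₂.card := hdx
      omega
  · -- tree
    have hwnotbig : ∀ (s' : Finset T'), IsBigClique (G.induce T') s' →
        (⟨w, Set.mem_insert _ _⟩ : T') ∉ s' := by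
      intro s' h hmem
      exact hw ((hbig' s' h).1 (mem_map_subtype_iff.mpr hmem))
    constructor
    · -- connected
      apply contract_connected
      rw [connected_iff]
      have hTconn : (G.induce T).Connected := connected_of_contract hT3.isConnected
      refine ⟨?_, ⟨⟨w, Set.mem_insert _ _⟩⟩⟩
      have hkey : ∀ x : T', (G.induce T').Reachable x ⟨u₀, hsubTT' hu⟩ := by
        intro x
        obtain ⟨xv, hxv⟩ := x
        rcases Set.mem_insert_iff.mp hxv with rfl | hxT
        · exact Adj.reachable (by exact hadj.symm)
        · have hreach := hTconn.preconnected ⟨xv, hxT⟩ ⟨u₀, hu⟩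
          exact hreach.map (G.induceHomOfLE hsubTT').toHom
      intro x y; exact (hkey x).trans (hkey y).symm
    · -- acyclic
      intro z c hc
      set w' : T' := (⟨w, Set.mem_insert _ _⟩ : T') with hw'def
      set Kw := Quot.mk (bigCliqueRel (G.induce T')) w' with hKwdef
      have hrel_w : ∀ x y : T', bigCliqueRel (G.induce T') x y → (x = w' ↔ y = w') := by
        intro x y hr
        rcases hr with rfl | ⟨s', hs', hx, hy⟩
        · exact Iff.rfl
        · constructor
          · rintro rfl; exact absurd hx (hwnotbig s' hs')
          · rintro rfl; exact absurd hy (hwnotbig s' hs')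
      have hclass_w : ∀ x : T', Quot.mk (bigCliqueRel (G.induce T')) x = Kw → x = w' := by
        intro x hx
        exact (eqvGen_invar (fun y => y = w') hrel_w (Quot.eqvGen_exact hx)).mpr rfl
      have hrelTT' : ∀ a b : ↥T, bigCliqueRel (G.induce T) a b →
          Quot.mk (bigCliqueRel (G.induce T')) ⟨a.1, hsubTT' a.2⟩
            = Quot.mk (bigCliqueRel (G.induce T')) ⟨b.1, hsubTT' b.2⟩ := by
        intro a b hr
        rcases hr with rfl | ⟨s₂, hs₂, ha, hb⟩
        · rfl
        · apply Quot.sound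
          right
          have hBig : BigIn G T' (s₂.map (Function.Embedding.subtype (· ∈ T))) :=
            (pendant_bigIn hw hnbr _).mpr (bigIn_of_isBigClique hs₂)
          obtain ⟨s₃, hs₃, hmap₃⟩ := isBigClique_of_bigIn hBig
          refine ⟨s₃, hs₃, ?_, ?_⟩
          · apply mem_map_subtype_iff.mp
            rw [hmap₃]; exact Finset.mem_map.mpr ⟨a, ha, rfl⟩
          · apply mem_map_subtype_iff.mp
            rw [hmap₃]; exact Finset.mem_map.mpr ⟨b, hb, rfl⟩
      let F : Quot (bigCliqueRel (G.induce T)) → Quot (bigCliqueRel (G.induce T')) :=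
        Quot.lift (fun a : ↥T => Quot.mk _ (⟨a.1, hsubTT' a.2⟩ : T')) hrelTT'
      let fT : T' → Quot (bigCliqueRel (G.induce T)) := fun x =>
        if h : x.1 ∈ T then Quot.mk _ (⟨x.1, h⟩ : T) else Quot.mk _ (⟨u₀, hu⟩ : T)
      have hfTcompat : ∀ x y : T', bigCliqueRel (G.induce T') x y → fT x = fT y := by
        intro x y hr
        rcases hr with rfl | ⟨s', hs', hx, hy⟩
        · rfl
        · have hBig := hbig' s' hs'
          have hxT : x.1 ∈ T := hBig.1 (mem_map_subtype_iff.mpr hx)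
          have hyT : y.1 ∈ T := hBig.1 (mem_map_subtype_iff.mpr hy)
          show dite _ _ _ = dite _ _ _
          rw [dif_pos hxT, dif_pos hyT]
          apply Quot.sound
          right
          obtain ⟨s₂, hs₂, hmap₂⟩ := isBigClique_of_bigIn hBig
          refine ⟨s₂, hs₂, ?_, ?_⟩
          · apply mem_map_subtype_iff.mp
            rw [hmap₂]; exact mem_map_subtype_iff.mpr hx
          · apply mem_map_subtype_iff.mp
            rw [hmap₂]; exact mem_map_subtype_iff.mpr hy
      let f : Quot (bigCliqueRel (G.induce T')) → Quot (bigCliqueRel (G.induce T)) :=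
        Quot.lift fT hfTcompat
      have hfT : ∀ (x : T') (h : x.1 ∈ T),
          f (Quot.mk (bigCliqueRel (G.induce T')) x) = Quot.mk _ (⟨x.1, h⟩ : ↥T) :=
        fun x h => dif_pos h
      have hmemT : ∀ x : T', x ≠ w' → x.1 ∈ T := by
        intro x hxw
        rcases Set.mem_insert_iff.mp x.2 with h | h
        · exact absurd (Subtype.ext h) hxw
        · exact h
      have hinj : ∀ a b, a ≠ Kw → b ≠ Kw → f a = f b → a = b := by
        intro a b ha hb hfab
        obtain ⟨x, rfl⟩ := a.exists_rep
        obtain ⟨y, rfl⟩ := b.exists_rep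
        have hx : x.1 ∈ T := hmemT x (fun h => ha (congrArg _ h))
        have hy : y.1 ∈ T := hmemT y (fun h => hb (congrArg _ h))
        have heq := (hfT x hx).symm.trans (hfab.trans (hfT y hy))
        have := congrArg F heq
        show Quot.mk _ x = Quot.mk _ y
        rw [show x = (⟨x.1, hsubTT' hx⟩ : T') from Subtype.ext rfl,
          show y = (⟨y.1, hsubTT' hy⟩ : T') from Subtype.ext rfl]
        exact this
      have hhom : ∀ a b, a ≠ Kw → b ≠ Kw →
          (contractBigCliques (G.induce T')).Adj a b →
          (contractBigCliques (G.induce T)).Adj (f a) (f b) := by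
        intro a b ha hb hadj'
        obtain ⟨hne, x, y, hxy, hx, hy⟩ := hadj'
        have hxw : x ≠ w' := fun h => ha (by rw [← hx, h])
        have hyw : y ≠ w' := fun h => hb (by rw [← hy, h])
        have hxT := hmemT x hxw
        have hyT := hmemT y hyw
        subst hx; subst hy
        refine ⟨fun h => hne (hinj _ _ ha hb h), ⟨x.1, hxT⟩, ⟨y.1, hyT⟩, hxy, ?_, ?_⟩
        · exact (hfT x hxT).symm
        · exact (hfT y hyT).symm
      have hnbrK : ∀ a, a ≠ Kw → (contractBigCliques (G.induce T')).Adj Kw a →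
          a = Quot.mk _ (⟨u₀, hsubTT' hu⟩ : T') := by
        intro a ha hadj'
        obtain ⟨hne, x, y, hxy, hx, hy⟩ := hadj'
        have hxw' : x = w' := hclass_w x hx
        have hyw : y ≠ w' := fun h => ha (by rw [← hy, h])
        have hyT := hmemT y hyw
        have hadjyw : G.Adj y.1 w := by
          have : G.Adj x.1 y.1 := hxy
          rw [hxw'] at this
          exact this.symm
        have hy₀ : y.1 = u₀ := hnbr y.1 hyT hadjyw
        rw [← hy]; exact congrArg _ (Subtype.ext hy₀)
      by_cases hKsupp : Kw ∈ c.support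
      · obtain ⟨a, b, d, hKa, hbK, hab, -, -⟩ :=
          cycle_decomp (c.rotate _ hKsupp) (hc.rotate hKsupp)
        exact hab ((hnbrK a hKa.ne' hKa).trans (hnbrK b hbK.ne hbK.symm).symm)
      · exact no_cycle_avoiding hT3.IsAcyclic Kw f hinj hhom c hc hKsupp

end Pendant

section Triangle

variable {V : Type*} [Fintype V] {G : SimpleGraph V} {T : Set V} {w u v : V}

lemma clique_uvw [DecidableEq V] (huv : G.Adj u v) (hwu : G.Adj u w) (hwv : G.Adj v w) :
    G.IsClique ↑({u, v, w} : Finset V) := by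
  intro a ha b hb hne
  simp only [Finset.coe_insert, Set.mem_insert_iff, Finset.coe_singleton,
    Set.mem_singleton_iff] at ha hb
  rcases ha with rfl | rfl | rfl <;> rcases hb with rfl | rfl | rfl
  · exact absurd rfl hne
  · exact huv
  · exact hwu
  · exact huv.symm
  · exact absurd rfl hne
  · exact hwv
  · exact hwu.symm
  · exact hwv.symm
  · exact absurd rfl hne

lemma triangle_bigIn [DecidableEq V] (hw : w ∉ T) (hu : u ∈ T) (hv : v ∈ T)
    (huv : G.Adj u v) (hwu : G.Adj u w) (hwv : G.Adj v w)
    (hnbr : ∀ t ∈ T, G.Adj t w → t = u ∨ t = v)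
    (hbigu : ∀ s, BigIn G T s → u ∉ s) (hbigv : ∀ s, BigIn G T s → v ∉ s)
    (s : Finset V) :
    BigIn G (insert w T) s ↔ (BigIn G T s ∨ s = {u, v, w}) := by
  have huw : u ≠ w := fun h => hw (h ▸ hu)
  have hvw : v ≠ w := fun h => hw (h ▸ hv)
  have hcard3 : ({u, v, w} : Finset V).card = 3 := by
    rw [Finset.card_insert_of_notMem (by simp [huv.ne, huw]),
      Finset.card_insert_of_notMem (by simp [hvw]), Finset.card_singleton]
  constructor
  · rintro ⟨hsub, hcl, hcard, hmax⟩
    by_cases hws : w ∈ s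
    · right
      have hsub3 : s ⊆ ({u, v, w} : Finset V) := by
        intro x hx
        by_cases hxw : x = w
        · simp [hxw]
        · have hxT : x ∈ T := (Set.mem_insert_iff.mp (hsub hx)).resolve_left hxw
          have hadj : G.Adj x w := hcl hx (Finset.mem_coe.mpr hws) hxw
          rcases hnbr x hxT hadj with rfl | rfl <;> simp
      have := hmax ({u, v, w} : Finset V)
        (by
          intro x hx
          simp only [Finset.coe_insert, Set.mem_insert_iff, Finset.coe_singleton,
            Set.mem_singleton_iff] at hx
          rcases hx with rfl | rfl | rfl
          · exact Set.mem_insert_of_mem _ hu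
          · exact Set.mem_insert_of_mem _ hv
          · exact Set.mem_insert _ _)
        (clique_uvw huv hwu hwv) hsub3
      exact this.symm
    · left
      have hsubT : ↑s ⊆ T := fun x hx =>
        (Set.mem_insert_iff.mp (hsub hx)).resolve_left
          (fun h => hws (Finset.mem_coe.mp (h ▸ hx)))
      exact ⟨hsubT, hcl, hcard, fun t ht hcl' hsub' =>
        hmax t (ht.trans (Set.subset_insert _ _)) hcl' hsub'⟩
  · rintro (⟨hsub, hcl, hcard, hmax⟩ | rfl)
    · refine ⟨hsub.trans (Set.subset_insert _ _), hcl, hcard, ?_⟩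
      intro t ht hcl' hsub'
      have hwt : w ∉ t := by
        intro hwt
        obtain ⟨a, ha⟩ := Finset.card_pos.mp (by omega : 0 < s.card)
        have haT : a ∈ T := hsub ha
        have haw : a ≠ w := fun h => hw (h ▸ haT)
        have hadj : G.Adj a w := hcl' (Finset.mem_coe.mpr (hsub' ha)) (Finset.mem_coe.mpr hwt) haw
        rcases hnbr a haT hadj with rfl | rfl
        · exact hbigu s ⟨hsub, hcl, hcard, hmax⟩ ha
        · exact hbigv s ⟨hsub, hcl, hcard, hmax⟩ ha
      have htT : ↑t ⊆ T := fun x hx =>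
        (Set.mem_insert_iff.mp (ht hx)).resolve_left
          (fun h => hwt (Finset.mem_coe.mp (h ▸ hx)))
      exact hmax t htT hcl' hsub'
    · refine ⟨?_, clique_uvw huv hwu hwv, by omega, ?_⟩
      · intro x hx
        simp only [Finset.coe_insert, Set.mem_insert_iff, Finset.coe_singleton,
          Set.mem_singleton_iff] at hx
        rcases hx with rfl | rfl | rfl
        · exact Set.mem_insert_of_mem _ hu
        · exact Set.mem_insert_of_mem _ hv
        · exact Set.mem_insert _ _
      · intro t ht hcl' hsub'
        refine Finset.Subset.antisymm ?_ hsub'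
        intro x hx
        by_cases hxs : x ∈ ({u, v, w} : Finset V)
        · exact hxs
        · exfalso
          have hxw : x ≠ w := fun h => hxs (by simp [h])
          have hxT : x ∈ T := (Set.mem_insert_iff.mp (ht hx)).resolve_left hxw
          have hadj : G.Adj x w := hcl' (Finset.mem_coe.mpr hx)
            (Finset.mem_coe.mpr (hsub' (by simp))) hxw
          rcases hnbr x hxT hadj with rfl | rfl
          · exact hxs (by simp)
          · exact hxs (by simp)

lemma triangle_bloated (hw : w ∉ T) (hu : u ∈ T) (hv : v ∈ T) (huv : G.Adj u v)
    (hwu : G.Adj u w) (hwv : G.Adj v w)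
    (hnbr : ∀ t ∈ T, G.Adj t w → t = u ∨ t = v)
    (hdegu : {t | t ∈ T ∧ G.Adj u t}.ncard ≤ 2)
    (hdegv : {t | t ∈ T ∧ G.Adj v t}.ncard ≤ 2)
    (hbigu : ∀ s, BigIn G T s → u ∉ s) (hbigv : ∀ s, BigIn G T s → v ∉ s)
    (hT : IsBloatedTree (G.induce T)) :
    IsBloatedTree (G.induce (insert w T)) := by
  classical
  obtain ⟨hT1, hT2, hT3⟩ := hT
  set T' := insert w T with hT'def
  have hsubTT' : T ⊆ T' := Set.subset_insert w T
  have huw : u ≠ w := fun h => hw (h ▸ hu)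
  have hvw : v ≠ w := fun h => hw (h ▸ hv)
  have hbig' : ∀ s' : Finset T', IsBigClique (G.induce T') s' →
      BigIn G T (s'.map (Function.Embedding.subtype (· ∈ T'))) ∨
        s'.map (Function.Embedding.subtype (· ∈ T')) = {u, v, w} := by
    intro s' h
    exact (triangle_bigIn hw hu hv huv hwu hwv hnbr hbigu hbigv _).mp (bigIn_of_isBigClique h)
  -- pull back a `BigIn T` clique
  have hback : ∀ s' : Finset T',
      s'.map (Function.Embedding.subtype (· ∈ T')) ∈ {q | BigIn G T q} →
      ∃ s₂ : Finset T, IsBigClique (G.induce T) s₂ ∧ s₂.card = s'.card ∧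
        ∀ x : T', (x ∈ s' ↔ ∃ hx : x.1 ∈ T, (⟨x.1, hx⟩ : T) ∈ s₂) := by
    intro s' h
    obtain ⟨s₂, hbig₂, hmap₂⟩ := isBigClique_of_bigIn h
    refine ⟨s₂, hbig₂, ?_, fun x => ?_⟩
    · have := congrArg Finset.card hmap₂
      simpa using this
    constructor
    · intro hx
      have hxV : x.1 ∈ s'.map (Function.Embedding.subtype (· ∈ T')) :=
        mem_map_subtype_iff.mpr hx
      rw [← hmap₂] at hxV
      obtain ⟨y, hy, hyx⟩ := Finset.mem_map.mp hxV
      refine ⟨hyx ▸ y.2, ?_⟩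
      have : (⟨x.1, hyx ▸ y.2⟩ : T) = y := Subtype.ext hyx.symm
      rw [this]; exact hy
    · rintro ⟨hxT, hmem⟩
      have hxV : x.1 ∈ s₂.map (Function.Embedding.subtype (· ∈ T)) :=
        Finset.mem_map.mpr ⟨⟨x.1, hxT⟩, hmem, rfl⟩
      rw [hmap₂] at hxV
      exact mem_map_subtype_iff.mp hxV
  refine ⟨?_, ?_, ?_⟩
  · -- edges in at most one big clique
    intro a b hab s t hs ht has hbs hat hbt
    rcases hbig' s hs with hsB | hsB <;> rcases hbig' t ht with htB | htB
    · obtain ⟨s₂, hs₂, -, hmems⟩ := hback s hsB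
      obtain ⟨t₂, ht₂, -, hmemt⟩ := hback t htB
      obtain ⟨haT, has₂⟩ := (hmems a).mp has
      obtain ⟨hbT, hbs₂⟩ := (hmems b).mp hbs
      obtain ⟨haT', hat₂⟩ := (hmemt a).mp hat
      obtain ⟨hbT', hbt₂⟩ := (hmemt b).mp hbt
      have hadj₂ : (G.induce T).Adj ⟨a.1, haT⟩ ⟨b.1, hbT⟩ := hab
      have heq := hT1 _ _ hadj₂ s₂ t₂ hs₂ ht₂ has₂ hbs₂ hat₂ hbt₂
      apply Finset.ext; intro x
      rw [hmems x, hmemt x, heq]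
    · -- s is a T-clique, t is the triangle: contradiction
      exfalso
      have haT : a.1 ∈ T := hsB.1 (mem_map_subtype_iff.mpr has)
      have hamem : a.1 ∈ ({u, v, w} : Finset V) := by
        rw [← htB]; exact mem_map_subtype_iff.mpr hat
      simp only [Finset.mem_insert, Finset.mem_singleton] at hamem
      rcases hamem with h | h | h
      · exact hbigu _ hsB (h ▸ mem_map_subtype_iff.mpr has)
      · exact hbigv _ hsB (h ▸ mem_map_subtype_iff.mpr has)
      · exact hw (h ▸ haT)
    · exfalso
      have haT : a.1 ∈ T := htB.1 (mem_map_subtype_iff.mpr hat)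
      have hamem : a.1 ∈ ({u, v, w} : Finset V) := by
        rw [← hsB]; exact mem_map_subtype_iff.mpr has
      simp only [Finset.mem_insert, Finset.mem_singleton] at hamem
      rcases hamem with h | h | h
      · exact hbigu _ htB (h ▸ mem_map_subtype_iff.mpr hat)
      · exact hbigv _ htB (h ▸ mem_map_subtype_iff.mpr hat)
      · exact hw (h ▸ haT)
    · have := hsB.trans htB.symm
      exact Finset.map_injective _ this
  · -- degrees
    intro s hs x hx
    have h3 : 3 ≤ s.card := by
      have := (bigIn_of_isBigClique hs).2.2.1; simpa using this
    rw [ncard_neighborSet_induce]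
    rcases hbig' s hs with hsB | hsB
    · have hxT : x.1 ∈ T := hsB.1 (mem_map_subtype_iff.mpr hx)
      have hxu : x.1 ≠ u := fun h => hbigu _ hsB (h ▸ mem_map_subtype_iff.mpr hx)
      have hxv : x.1 ≠ v := fun h => hbigv _ hsB (h ▸ mem_map_subtype_iff.mpr hx)
      have hset : {t | t ∈ T' ∧ G.Adj x.1 t} = {t | t ∈ T ∧ G.Adj x.1 t} := by
        ext t
        simp only [Set.mem_setOf_eq, hT'def, Set.mem_insert_iff]
        constructor
        · rintro ⟨(rfl | htT), hadj'⟩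
          · rcases hnbr x.1 hxT hadj' with h | h
            · exact absurd h hxu
            · exact absurd h hxv
          · exact ⟨htT, hadj'⟩
        · rintro ⟨htT, hadj'⟩; exact ⟨Or.inr htT, hadj'⟩
      rw [hset]
      obtain ⟨s₂, hs₂, hcard₂, hmems⟩ := hback s hsB
      obtain ⟨hxT₂, hxs₂⟩ := (hmems x).mp hx
      have hdx := hT2 s₂ hs₂ ⟨x.1, hxT₂⟩ hxs₂
      rw [ncard_neighborSet_induce] at hdx
      have hdx' : {t | t ∈ T ∧ G.Adj x.1 t}.ncard ≤ s₂.card := hdx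
      omega
    · -- the triangle: s has card 3
      have hcard : s.card = 3 := by
        have h1 : ({u, v, w} : Finset V).card = 3 := by
          rw [Finset.card_insert_of_notMem (by simp [huv.ne, huw]),
            Finset.card_insert_of_notMem (by simp [hvw]), Finset.card_singleton]
        have := congrArg Finset.card hsB
        simpa [h1] using this
      have hxmem : x.1 ∈ ({u, v, w} : Finset V) := by
        rw [← hsB]; exact mem_map_subtype_iff.mpr hx
      simp only [Finset.mem_insert, Finset.mem_singleton] at hxmem
      have hinsert : ∀ y₀ ∈ T, G.Adj y₀ w →
          {t | t ∈ T' ∧ G.Adj y₀ t} = insert w {t | t ∈ T ∧ G.Adj y₀ t} := by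
        intro y₀ hy₀ hadj'
        ext t
        simp only [Set.mem_insert_iff, Set.mem_setOf_eq, hT'def]
        constructor
        · rintro ⟨(rfl | htT), hadj''⟩
          · exact Or.inl rfl
          · exact Or.inr ⟨htT, hadj''⟩
        · rintro (rfl | ⟨htT, hadj''⟩)
          · exact ⟨Or.inl rfl, hadj'⟩
          · exact ⟨Or.inr htT, hadj''⟩
      rcases hxmem with hxu | hxv | hxw
      · rw [hxu, hinsert u hu hwu,
          Set.ncard_insert_of_notMem (fun h => hw h.1) (Set.toFinite _)]
        omega
      · rw [hxv, hinsert v hv hwv,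
          Set.ncard_insert_of_notMem (fun h => hw h.1) (Set.toFinite _)]
        omega
      · have hsub2 : {t | t ∈ T' ∧ G.Adj x.1 t} ⊆ {u, v} := by
          rintro t ⟨htT', hadj'⟩
          rcases Set.mem_insert_iff.mp htT' with rfl | htT
          · exact absurd (hxw ▸ hadj') (G.loopless.irrefl t)
          · rcases hnbr t htT (hxw ▸ hadj').symm with rfl | rfl
            · exact Set.mem_insert _ _
            · exact Set.mem_insert_of_mem _ rfl
        have := Set.ncard_le_ncard hsub2 (Set.toFinite _)
        have h2 : ({u, v} : Set V).ncard ≤ 2 :=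
          le_trans (Set.ncard_insert_le _ _) (by simp)
        omega
  · -- tree
    have hBigT' : BigIn G T' ({u, v, w} : Finset V) :=
      (triangle_bigIn hw hu hv huv hwu hwv hnbr hbigu hbigv _).mpr (Or.inr rfl)
    obtain ⟨sΔ, hsΔ, hmapΔ⟩ := isBigClique_of_bigIn hBigT'
    have hmemΔ : ∀ x : T', x.1 ∈ ({u, v, w} : Finset V) → x ∈ sΔ := by
      intro x hx
      apply mem_map_subtype_iff.mp
      rw [hmapΔ]; exact hx
    constructor
    · -- connected
      apply contract_connected
      rw [connected_iff]
      have hTconn : (G.induce T).Connected := connected_of_contract hT3.isConnected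
      refine ⟨?_, ⟨⟨w, Set.mem_insert _ _⟩⟩⟩
      have hkey : ∀ x : T', (G.induce T').Reachable x ⟨u, hsubTT' hu⟩ := by
        intro x
        obtain ⟨xv, hxv⟩ := x
        rcases Set.mem_insert_iff.mp hxv with rfl | hxT
        · exact Adj.reachable (by exact hwu.symm)
        · have hreach := hTconn.preconnected ⟨xv, hxT⟩ ⟨u, hu⟩
          exact hreach.map (G.induceHomOfLE hsubTT').toHom
      intro x y; exact (hkey x).trans (hkey y).symm
    · -- acyclic
      intro z c hc
      have hP : ∀ x : T', x.1 = u ∨ x.1 = v ∨ x.1 = w ↔ x.1 ∈ ({u, v, w} : Finset V) := by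
        intro x; simp
      set P : T' → Prop := fun x => x.1 = u ∨ x.1 = v ∨ x.1 = w with hPdef
      set K := Quot.mk (bigCliqueRel (G.induce T')) (⟨u, hsubTT' hu⟩ : T') with hKdef
      have hrel_P : ∀ x y : T', bigCliqueRel (G.induce T') x y → (P x ↔ P y) := by
        intro x y hr
        rcases hr with rfl | ⟨s', hs', hx, hy⟩
        · exact Iff.rfl
        · rcases hbig' s' hs' with hB | hB
          · constructor
            · rintro (h | h | h)
              · exact absurd (h ▸ mem_map_subtype_iff.mpr hx) (hbigu _ hB)
              · exact absurd (h ▸ mem_map_subtype_iff.mpr hx) (hbigv _ hB)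
              · exact absurd (h ▸ hB.1 (mem_map_subtype_iff.mpr hx)) hw
            · rintro (h | h | h)
              · exact absurd (h ▸ mem_map_subtype_iff.mpr hy) (hbigu _ hB)
              · exact absurd (h ▸ mem_map_subtype_iff.mpr hy) (hbigv _ hB)
              · exact absurd (h ▸ hB.1 (mem_map_subtype_iff.mpr hy)) hw
          · have hx' : x.1 ∈ ({u, v, w} : Finset V) := by
              rw [← hB]; exact mem_map_subtype_iff.mpr hx
            have hy' : y.1 ∈ ({u, v, w} : Finset V) := by
              rw [← hB]; exact mem_map_subtype_iff.mpr hy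
            simp only [Finset.mem_insert, Finset.mem_singleton] at hx' hy'
            exact iff_of_true hx' hy'
      have hrelΔ : ∀ x y : T', x ∈ sΔ → y ∈ sΔ →
          Quot.mk (bigCliqueRel (G.induce T')) x = Quot.mk (bigCliqueRel (G.induce T')) y :=
        fun x y hx hy => Quot.sound (Or.inr ⟨sΔ, hsΔ, hx, hy⟩)
      have hclassK : ∀ x : T', Quot.mk (bigCliqueRel (G.induce T')) x = K ↔ P x := by
        intro x
        constructor
        · intro hx
          have := eqvGen_invar P hrel_P (Quot.eqvGen_exact hx)
          exact this.mpr (Or.inl rfl)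
        · intro hx
          apply hrelΔ
          · exact hmemΔ x ((hP x).mp hx)
          · exact hmemΔ _ (by simp)
      have hrelTT' : ∀ a b : ↥T, bigCliqueRel (G.induce T) a b →
          Quot.mk (bigCliqueRel (G.induce T')) ⟨a.1, hsubTT' a.2⟩
            = Quot.mk (bigCliqueRel (G.induce T')) ⟨b.1, hsubTT' b.2⟩ := by
        intro a b hr
        rcases hr with rfl | ⟨s₂, hs₂, ha, hb⟩
        · rfl
        · apply Quot.sound
          right
          have hBig : BigIn G T' (s₂.map (Function.Embedding.subtype (· ∈ T))) :=
            (triangle_bigIn hw hu hv huv hwu hwv hnbr hbigu hbigv _).mpr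
              (Or.inl (bigIn_of_isBigClique hs₂))
          obtain ⟨s₃, hs₃, hmap₃⟩ := isBigClique_of_bigIn hBig
          refine ⟨s₃, hs₃, ?_, ?_⟩
          · apply mem_map_subtype_iff.mp
            rw [hmap₃]; exact Finset.mem_map.mpr ⟨a, ha, rfl⟩
          · apply mem_map_subtype_iff.mp
            rw [hmap₃]; exact Finset.mem_map.mpr ⟨b, hb, rfl⟩
      let F : Quot (bigCliqueRel (G.induce T)) → Quot (bigCliqueRel (G.induce T')) :=
        Quot.lift (fun a : ↥T => Quot.mk _ (⟨a.1, hsubTT' a.2⟩ : T')) hrelTT'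
      let fT : T' → Quot (bigCliqueRel (G.induce T)) := fun x =>
        if h : x.1 ∈ T ∧ ¬ P x then Quot.mk _ (⟨x.1, h.1⟩ : T) else Quot.mk _ (⟨u, hu⟩ : T)
      have hfTcompat : ∀ x y : T', bigCliqueRel (G.induce T') x y → fT x = fT y := by
        intro x y hr
        rcases hr with rfl | ⟨s', hs', hx, hy⟩
        · rfl
        · rcases hbig' s' hs' with hB | hB
          · have hxT : x.1 ∈ T := hB.1 (mem_map_subtype_iff.mpr hx)
            have hyT : y.1 ∈ T := hB.1 (mem_map_subtype_iff.mpr hy)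
            have hxP : ¬ P x := fun h => ((hrel_P x x (Or.inl rfl)).mp h) |>.elim
              (fun h' => absurd (h' ▸ mem_map_subtype_iff.mpr hx) (hbigu _ hB))
              (fun h' => h'.elim
                (fun h'' => absurd (h'' ▸ mem_map_subtype_iff.mpr hx) (hbigv _ hB))
                (fun h'' => absurd (h'' ▸ hxT) hw))
            have hyP : ¬ P y := fun h => h.elim
              (fun h' => absurd (h' ▸ mem_map_subtype_iff.mpr hy) (hbigu _ hB))
              (fun h' => h'.elim
                (fun h'' => absurd (h'' ▸ mem_map_subtype_iff.mpr hy) (hbigv _ hB))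
                (fun h'' => absurd (h'' ▸ hyT) hw))
            show dite _ _ _ = dite _ _ _
            rw [dif_pos ⟨hxT, hxP⟩, dif_pos ⟨hyT, hyP⟩]
            apply Quot.sound
            right
            obtain ⟨s₂, hs₂, hmap₂⟩ := isBigClique_of_bigIn hB
            refine ⟨s₂, hs₂, ?_, ?_⟩
            · apply mem_map_subtype_iff.mp
              rw [hmap₂]; exact mem_map_subtype_iff.mpr hx
            · apply mem_map_subtype_iff.mp
              rw [hmap₂]; exact mem_map_subtype_iff.mpr hy
          · have hxP : P x := (hP x).mpr (by rw [← hB]; exact mem_map_subtype_iff.mpr hx)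
            have hyP : P y := (hP y).mpr (by rw [← hB]; exact mem_map_subtype_iff.mpr hy)
            show dite _ _ _ = dite _ _ _
            rw [dif_neg (fun h => h.2 hxP), dif_neg (fun h => h.2 hyP)]
      let f : Quot (bigCliqueRel (G.induce T')) → Quot (bigCliqueRel (G.induce T)) :=
        Quot.lift fT hfTcompat
      have hfT : ∀ (x : T') (h : x.1 ∈ T ∧ ¬ P x),
          f (Quot.mk (bigCliqueRel (G.induce T')) x) = Quot.mk _ (⟨x.1, h.1⟩ : ↥T) :=
        fun x h => dif_pos h
      have hmemT : ∀ x : T', ¬ P x → x.1 ∈ T := by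
        intro x hxP
        rcases Set.mem_insert_iff.mp x.2 with h | h
        · exact absurd (Or.inr (Or.inr h)) hxP
        · exact h
      have hnotPK : ∀ x : T', Quot.mk (bigCliqueRel (G.induce T')) x ≠ K → ¬ P x :=
        fun x hx hP' => hx ((hclassK x).mpr hP')
      -- triviality of the classes of u and v in T
      have htrivial : ∀ (y₀) (hy₀ : y₀ ∈ T), (∀ s, BigIn G T s → y₀ ∉ s) →
          ∀ a : ↥T, Relation.EqvGen (bigCliqueRel (G.induce T)) a ⟨y₀, hy₀⟩ →
            a = ⟨y₀, hy₀⟩ := by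
        intro y₀ hy₀ hbig a ha
        have hinv : ∀ a b : ↥T, bigCliqueRel (G.induce T) a b →
            ((a = ⟨y₀, hy₀⟩) ↔ (b = ⟨y₀, hy₀⟩)) := by
          intro a b hr
          rcases hr with rfl | ⟨s₂, hs₂, ha', hb'⟩
          · exact Iff.rfl
          · constructor
            · rintro rfl
              exact absurd (mem_map_subtype_iff.mpr ha') (hbig _ (bigIn_of_isBigClique hs₂))
            · rintro rfl
              exact absurd (mem_map_subtype_iff.mpr hb') (hbig _ (bigIn_of_isBigClique hs₂))
        exact (eqvGen_invar _ hinv ha).mpr rfl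
      have hinj : ∀ a b, a ≠ K → b ≠ K → f a = f b → a = b := by
        intro a b ha hb hfab
        obtain ⟨x, rfl⟩ := a.exists_rep
        obtain ⟨y, rfl⟩ := b.exists_rep
        have hxP : ¬ P x := hnotPK x ha
        have hyP : ¬ P y := hnotPK y hb
        have hx : x.1 ∈ T := hmemT x hxP
        have hy : y.1 ∈ T := hmemT y hyP
        have heq := (hfT x ⟨hx, hxP⟩).symm.trans (hfab.trans (hfT y ⟨hy, hyP⟩))
        have := congrArg F heq
        show Quot.mk _ x = Quot.mk _ y
        rw [show x = (⟨x.1, hsubTT' hx⟩ : T') from Subtype.ext rfl,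
          show y = (⟨y.1, hsubTT' hy⟩ : T') from Subtype.ext rfl]
        exact this
      have hhom : ∀ a b, a ≠ K → b ≠ K →
          (contractBigCliques (G.induce T')).Adj a b →
          (contractBigCliques (G.induce T)).Adj (f a) (f b) := by
        intro a b ha hb hadj'
        obtain ⟨hne, x, y, hxy, hx, hy⟩ := hadj'
        have hxP : ¬ P x := hnotPK x (hx ▸ ha)
        have hyP : ¬ P y := hnotPK y (hy ▸ hb)
        have hxT := hmemT x hxP
        have hyT := hmemT y hyP
        subst hx; subst hy
        refine ⟨fun h => hne (hinj _ _ ha hb h), ⟨x.1, hxT⟩, ⟨y.1, hyT⟩, hxy, ?_, ?_⟩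
        · exact (hfT x ⟨hxT, hxP⟩).symm
        · exact (hfT y ⟨hyT, hyP⟩).symm
      have hfu : ∀ a, a ≠ K → f a ≠ Quot.mk _ (⟨u, hu⟩ : ↥T) ∧
          f a ≠ Quot.mk _ (⟨v, hv⟩ : ↥T) := by
        intro a ha
        obtain ⟨x, rfl⟩ := a.exists_rep
        have hxP : ¬ P x := hnotPK x ha
        have hxT := hmemT x hxP
        rw [hfT x ⟨hxT, hxP⟩]
        constructor
        · intro h
          have := htrivial u hu hbigu _ (Quot.eqvGen_exact h)
          exact hxP (Or.inl (congrArg Subtype.val this))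
        · intro h
          have := htrivial v hv hbigv _ (Quot.eqvGen_exact h)
          exact hxP (Or.inr (Or.inl (congrArg Subtype.val this)))
      have huvCT : (contractBigCliques (G.induce T)).Adj
          (Quot.mk _ (⟨u, hu⟩ : ↥T)) (Quot.mk _ (⟨v, hv⟩ : ↥T)) := by
        refine ⟨?_, ⟨u, hu⟩, ⟨v, hv⟩, huv, rfl, rfl⟩
        intro h
        have := htrivial v hv hbigv _ (Quot.eqvGen_exact h)
        exact huv.ne (congrArg Subtype.val this)
      have hnbrK : ∀ a, a ≠ K → (contractBigCliques (G.induce T')).Adj K a →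
          (contractBigCliques (G.induce T)).Adj (Quot.mk _ (⟨u, hu⟩ : ↥T)) (f a) ∨
          (contractBigCliques (G.induce T)).Adj (Quot.mk _ (⟨v, hv⟩ : ↥T)) (f a) := by
        intro a ha hadj'
        obtain ⟨hne, x, y, hxy, hx, hy⟩ := hadj'
        have hxP : P x := (hclassK x).mp hx
        have hyP : ¬ P y := hnotPK y (hy ▸ ha)
        have hyT := hmemT y hyP
        have hfa : f a = Quot.mk _ (⟨y.1, hyT⟩ : ↥T) := by
          rw [← hy]; exact hfT y ⟨hyT, hyP⟩
        have hGxy : G.Adj x.1 y.1 := hxy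
        rcases hxP with hxu | hxv | hxw
        · left
          rw [hfa]
          refine ⟨?_, ⟨u, hu⟩, ⟨y.1, hyT⟩, hxu ▸ hGxy, rfl, rfl⟩
          intro h
          have := htrivial u hu hbigu _ (Quot.eqvGen_exact h.symm)
          exact hyP (Or.inl (congrArg Subtype.val this))
        · right
          rw [hfa]
          refine ⟨?_, ⟨v, hv⟩, ⟨y.1, hyT⟩, hxv ▸ hGxy, rfl, rfl⟩
          intro h
          have := htrivial v hv hbigv _ (Quot.eqvGen_exact h.symm)
          exact hyP (Or.inr (Or.inl (congrArg Subtype.val this)))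
        · exfalso
          have : G.Adj y.1 w := (hxw ▸ hGxy).symm
          rcases hnbr y.1 hyT this with h | h
          · exact hyP (Or.inl h)
          · exact hyP (Or.inr (Or.inl h))
      by_cases hKsupp : K ∈ c.support
      · exact no_cycle_through hT3.IsAcyclic K f _ _ hinj hhom hfu huvCT hnbrK
          (c.rotate _ hKsupp) (hc.rotate hKsupp)
      · exact no_cycle_avoiding hT3.IsAcyclic K f hinj hhom c hc hKsupp

end Triangle

section Main

variable {V : Type*} [Fintype V] {G : SimpleGraph V}

/-- The structural facts on one side of the edge `uv`. -/
lemma cut_side (hG : G.Connected) {T : Set V}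
    (hT : IsBloatedTree (G.induce T))
    (hmax : ∀ T' : Set V, T ⊆ T' → IsBloatedTree (G.induce T') → T' = T)
    {u v : V} (hu : u ∈ T) (hv : v ∈ T) (huv : G.Adj u v)
    (hdu : ({w | w ∈ T ∧ G.Adj u w}).ncard = 2)
    (hcu : ¬ (G.induce {w | w ≠ u}).Connected) :
    ∃ (u' : V) (hu'T : u' ∈ T), G.Adj u u' ∧ u' ≠ v ∧
      (∀ t ∈ T, G.Adj u t → t = v ∨ t = u') ∧
      ¬ RA G u u' v ∧
      ¬ RA (G.induce T) ⟨u, hu⟩ ⟨v, hv⟩ ⟨u', hu'T⟩ ∧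
      (∀ (t : V) (ht : t ∈ T), t ≠ u →
        RA (G.induce T) ⟨u, hu⟩ ⟨t, ht⟩ ⟨v, hv⟩ ∨
        RA (G.induce T) ⟨u, hu⟩ ⟨t, ht⟩ ⟨u', hu'T⟩) := by
  classical
  have hvu : v ≠ u := huv.ne'
  obtain ⟨x, y, hxy, hset⟩ := Set.ncard_eq_two.mp hdu
  have hvmem : v ∈ ({x, y} : Set V) := hset ▸ (⟨hv, huv⟩ : v ∈ {w | w ∈ T ∧ G.Adj u w})
  obtain ⟨u', hu'ne, hset'⟩ : ∃ u', u' ≠ v ∧ ({w | w ∈ T ∧ G.Adj u w}) = {v, u'} := by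
    rcases hvmem with rfl | rfl
    · exact ⟨y, fun h => hxy h.symm, hset⟩
    · refine ⟨x, fun h => hxy h, by rw [hset, Set.pair_comm]⟩
  have hu'mem : u' ∈ ({w | w ∈ T ∧ G.Adj u w}) := hset' ▸ Set.mem_insert_of_mem _ rfl
  obtain ⟨hu'T, huu'⟩ := hu'mem
  have hNu : ∀ t ∈ T, G.Adj u t → t = v ∨ t = u' := by
    intro t htT hadj
    have : t ∈ ({v, u'} : Set V) := hset' ▸ (⟨htT, hadj⟩ : t ∈ {w | w ∈ T ∧ G.Adj u w})
    simpa using this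
  have hTconn : (G.induce T).Connected := connected_of_contract hT.2.2.isConnected
  have hTreach : ∀ (t : V) (ht : t ∈ T), t ≠ u →
      RA (G.induce T) ⟨u, hu⟩ ⟨t, ht⟩ ⟨v, hv⟩ ∨
      RA (G.induce T) ⟨u, hu⟩ ⟨t, ht⟩ ⟨u', hu'T⟩ := by
    intro t ht htu
    obtain ⟨p⟩ := hTconn.preconnected ⟨t, ht⟩ ⟨u, hu⟩
    obtain ⟨n, hn, hra⟩ := exists_adj_avoid p (fun h => htu (congrArg Subtype.val h))
    have hnadj : G.Adj u n.1 := Adj.symm hn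
    rcases hNu n.1 n.2 hnadj with h | h
    · left
      have heq : n = (⟨v, hv⟩ : T) := Subtype.ext h
      rwa [heq] at hra
    · right
      have heq : n = (⟨u', hu'T⟩ : T) := Subtype.ext h
      rwa [heq] at hra
  have hPend : ∀ z, z ∉ T → G.Adj z u → (∀ t ∈ T, G.Adj t z → t = u) → False := by
    intro z hzT hzu hznbr
    have hbt : IsBloatedTree (G.induce (insert z T)) :=
      pendant_bloated hzT hu hzu.symm hznbr (le_of_eq hdu) hT
    have := hmax (insert z T) (Set.subset_insert _ _) hbt
    exact hzT (this ▸ Set.mem_insert z T)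
  have hA : ∃ a, a ≠ u ∧ ¬ RA G u a v := by
    by_contra hall
    push_neg at hall
    apply hcu
    rw [connected_iff]
    refine ⟨?_, ⟨⟨v, hvu⟩⟩⟩
    intro x y
    have hx : RA G u x.1 v := hall x.1 x.2
    have hy : RA G u y.1 v := hall y.1 y.2
    exact (RA_iff_induce (G := G) x.2 y.2).mp (hx.trans hy.symm)
  have hAuT : ∃ (t₀ : V), t₀ ∈ T ∧ t₀ ≠ u ∧ ¬ RA G u t₀ v := by
    obtain ⟨a, hau, hav⟩ := hA
    obtain ⟨p⟩ := hG.preconnected a u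
    obtain ⟨z, hzu, hraz⟩ := exists_adj_avoid p hau
    have hzne : z ≠ u := hzu.ne
    have hzv : ¬ RA G u z v := fun h => hav (hraz.trans h)
    by_cases hzT : z ∈ T
    · exact ⟨z, hzT, hzne, hzv⟩
    · by_cases hex : ∃ t, t ∈ T ∧ t ≠ u ∧ ¬ RA G u t v
      · exact hex
      · exfalso
        push_neg at hex
        apply hPend z hzT hzu
        intro t htT hadj
        by_contra htu
        have htv : RA G u t v := hex t htT htu
        exact hzv ((RA.of_adj hadj.symm hzne htu).trans htv)
  obtain ⟨t₀, ht₀T, ht₀u, ht₀v⟩ := hAuT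
  have ht₀u' : RA (G.induce T) ⟨u, hu⟩ ⟨t₀, ht₀T⟩ ⟨u', hu'T⟩ := by
    rcases hTreach t₀ ht₀T ht₀u with h | h
    · exact absurd (RA_of_induce h) ht₀v
    · exact h
  have hu'Au : ¬ RA G u u' v := fun h => ht₀v ((RA_of_induce ht₀u').trans h)
  have hsep : ¬ RA (G.induce T) ⟨u, hu⟩ ⟨v, hv⟩ ⟨u', hu'T⟩ := fun h =>
    ht₀v (RA_of_induce (ht₀u'.trans h.symm))
  exact ⟨u', hu'T, huu', hu'ne, hNu, hu'Au, hsep, hTreach⟩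

end Main

end BridgeAux

/-- **Lemma 3.3.** In a connected graph `G` with a maximal induced bloated tree `T`,
if `u, v ∈ T` are adjacent, both have degree two in `T`, and both are cut vertices
of `G`, then `uv` is a bridge of `G`. -/
theorem bridge_of_maximal_bloated_tree (V : Type) [Fintype V]
    (G : SimpleGraph V) (hG : G.Connected)
    (T : Set V) (hT : IsBloatedTree (G.induce T))
    (hmax : ∀ T' : Set V, T ⊆ T' → IsBloatedTree (G.induce T') → T' = T)
    (u v : V) (hu : u ∈ T) (hv : v ∈ T) (huv : G.Adj u v)
    (hdu : ({w ∈ T | G.Adj u w}).ncard = 2)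
    (hdv : ({w ∈ T | G.Adj v w}).ncard = 2)
    (hcu : ¬ (G.induce {w | w ≠ u}).Connected)
    (hcv : ¬ (G.induce {w | w ≠ v}).Connected) :
    ¬ (G.deleteEdges {s(u, v)}).Connected := by
  classical
  obtain ⟨u', hu'T, huu', hu'ne, hNu, hu'Au, hsep_u, hTreach⟩ :=
    cut_side hG hT hmax hu hv huv hdu hcu
  obtain ⟨v', hv'T, hvv', hv'ne, hNv, hv'Bv, hsep_v, hTreachv⟩ :=
    cut_side hG hT hmax hv hu huv.symm hdv hcv
  -- u and v are in no triangle of T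
  have hvu'nadj : ¬ G.Adj v u' := by
    intro h
    exact hsep_u (RA.of_adj (by exact h : (G.induce T).Adj ⟨v, hv⟩ ⟨u', hu'T⟩)
      (fun hh => huv.ne' (congrArg Subtype.val hh))
      (fun hh => huu'.ne' (congrArg Subtype.val hh)))
  have huv'nadj : ¬ G.Adj u v' := by
    intro h
    exact hsep_v (RA.of_adj (by exact h : (G.induce T).Adj ⟨u, hu⟩ ⟨v', hv'T⟩)
      (fun hh => huv.ne (congrArg Subtype.val hh))
      (fun hh => hvv'.ne' (congrArg Subtype.val hh)))
  -- u, v are in no big clique of T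
  have hbig : ∀ (y₀ n₁ n₂ : V), (∀ t ∈ T, G.Adj y₀ t → t = n₁ ∨ t = n₂) →
      ¬ G.Adj n₁ n₂ → n₁ ≠ n₂ → ∀ s, BigIn G T s → y₀ ∉ s := by
    intro y₀ n₁ n₂ hN hnadj hne s hsB hys
    obtain ⟨hsub, hcl, hcard, -⟩ := hsB
    have herase : 1 < (s.erase y₀).card := by
      rw [Finset.card_erase_of_mem hys]; omega
    obtain ⟨a, ha, b, hb, hab⟩ := Finset.one_lt_card.mp herase
    obtain ⟨hay, has⟩ := Finset.mem_erase.mp ha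
    obtain ⟨hby, hbs⟩ := Finset.mem_erase.mp hb
    have hadja : G.Adj y₀ a := hcl (Finset.mem_coe.mpr hys) (Finset.mem_coe.mpr has) (Ne.symm hay)
    have hadjb : G.Adj y₀ b := hcl (Finset.mem_coe.mpr hys) (Finset.mem_coe.mpr hbs) (Ne.symm hby)
    have hmem : n₁ ∈ s ∧ n₂ ∈ s := by
      rcases hN a (hsub has) hadja with h1 | h1 <;>
        rcases hN b (hsub hbs) hadjb with h2 | h2
      · exact absurd (h1.trans h2.symm) hab
      · exact ⟨h1 ▸ has, h2 ▸ hbs⟩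
      · exact ⟨h2 ▸ hbs, h1 ▸ has⟩
      · exact absurd (h1.trans h2.symm) hab
    exact hnadj (hcl (Finset.mem_coe.mpr hmem.1) (Finset.mem_coe.mpr hmem.2) hne)
  have hbigu : ∀ s, BigIn G T s → u ∉ s :=
    hbig u v u' hNu (fun h => hvu'nadj h) hu'ne.symm
  have hbigv : ∀ s, BigIn G T s → v ∉ s :=
    hbig v u v' hNv (fun h => huv'nadj h) hv'ne.symm
  -- the key claim: no neighbour of u other than v reaches v without u
  have hclaim : ∀ z, G.Adj u z → z ≠ v → ¬ RA G u z v := by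
    intro z hadjz hzv hRA
    have hzu : z ≠ u := hadjz.ne'
    have hzBu : RA G v z u := RA.of_adj hadjz.symm hzv huv.ne
    have hzT : z ∉ T := by
      intro hzT
      rcases hNu z hzT hadjz with h | h
      · exact hzv h
      · rw [h] at hRA; exact hu'Au hRA
    have hznbr : ∀ t ∈ T, G.Adj t z → t = u ∨ t = v := by
      intro t htT hadj
      by_contra hcon
      push_neg at hcon
      obtain ⟨htu, htv⟩ := hcon
      have htRA : RA G u t v := (RA.of_adj hadj htu hzu).trans hRA
      have htvT : RA (G.induce T) ⟨u, hu⟩ ⟨t, htT⟩ ⟨v, hv⟩ := by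
        rcases hTreach t htT htu with h | h
        · exact h
        · exact absurd ((RA_of_induce h).symm.trans htRA) hu'Au
      have htv'T : RA G v t v' := by
        rcases hTreachv t htT htv with h | h
        · exfalso
          obtain ⟨pw, hpw⟩ := h
          obtain ⟨n, q, hnadj, hnu, hnsub⟩ := exists_adj_avoid_strong pw
            (fun hh => htu (congrArg Subtype.val hh))
          have hnv : n ≠ (⟨v, hv⟩ : T) := fun hh =>
            hpw (hh ▸ hnsub n q.end_mem_support)
          rcases hNu n.1 n.2 hnadj.symm with hh | hh
          · exact hnv (Subtype.ext hh)
          · have hn' : n = (⟨u', hu'T⟩ : T) := Subtype.ext hh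
            subst hn'
            exact hsep_u (htvT.symm.trans ⟨q, hnu⟩)
        · exact RA_of_induce h
      have hnot : ¬ RA G v t u := fun hh => hv'Bv (htv'T.symm.trans hh)
      exact hnot ((RA.of_adj hadj htv hzv).trans hzBu)
    by_cases hzadjv : G.Adj v z
    · have hbt := triangle_bloated hzT hu hv huv hadjz hzadjv hznbr
        (le_of_eq hdu) (le_of_eq hdv) hbigu hbigv hT
      have := hmax _ (Set.subset_insert _ _) hbt
      exact hzT (this ▸ Set.mem_insert z T)
    · have hnbr1 : ∀ t ∈ T, G.Adj t z → t = u := by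
        intro t htT hadj
        rcases hznbr t htT hadj with h | h
        · exact h
        · exact absurd (h ▸ hadj) hzadjv
      have hbt := pendant_bloated hzT hu hadjz hnbr1 (le_of_eq hdu) hT
      have := hmax _ (Set.subset_insert _ _) hbt
      exact hzT (this ▸ Set.mem_insert z T)
  -- conclude: the far side of u is closed in G - uv
  intro hconn
  obtain ⟨p⟩ := hconn.preconnected v u
  have hstep : ∀ (x z : V) (q : (G.deleteEdges {s(u, v)}).Walk x z),
      x ≠ u → RA G u x v → z ≠ u ∧ RA G u z v := by
    intro x z q
    induction q with
    | nil => intro h1 h2; exact ⟨h1, h2⟩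
    | cons h q ih =>
      rename_i a b c
      intro h1 h2
      rw [SimpleGraph.deleteEdges_adj] at h
      obtain ⟨hab, hedge⟩ := h
      have hbu : b ≠ u := by
        rintro rfl
        by_cases hav : a = v
        · subst hav
          exact hedge (by rw [Sym2.eq_swap]; rfl)
        · exact hclaim a hab.symm hav h2
      have hbv : RA G u b v := (RA.of_adj hab.symm hbu h1).trans h2
      exact ih hbu hbv
  exact (hstep v u p huv.ne' (RA.refl huv.ne')).1 rfl
end

section
/- Every tree T with at least ℓ leaves has a subtree which contains at least √ℓ of the leaves of T and has no two adjacent branching vertices (where a branching vertex of the subtree is a vertex of degree at least 3 in the subtree). -/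
open SimpleGraph

namespace SubtreeAux

variable {V : Type} {T : SimpleGraph V}

/-- Reachability inside a vertex set `W`, via walks of `T` whose support stays in `W`. -/
def ReachIn (T : SimpleGraph V) (W : Set V) (a b : V) : Prop :=
  ∃ p : T.Walk a b, ∀ y ∈ p.support, y ∈ W

lemma reachIn_refl {W : Set V} {a : V} (ha : a ∈ W) : ReachIn T W a a :=
  ⟨Walk.nil, by simpa using ha⟩

lemma ReachIn.mono {W W' : Set V} (h : W ⊆ W') {a b : V} : ReachIn T W a b → ReachIn T W' a b :=
  fun ⟨p, hp⟩ => ⟨p, fun y hy => h (hp y hy)⟩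

lemma ReachIn.symm {W : Set V} {a b : V} : ReachIn T W a b → ReachIn T W b a :=
  fun ⟨p, hp⟩ => ⟨p.reverse, fun y hy => hp y (by simpa [Walk.support_reverse] using hy)⟩

lemma ReachIn.trans {W : Set V} {a b c : V} : ReachIn T W a b → ReachIn T W b c → ReachIn T W a c :=
  fun ⟨p, hp⟩ ⟨q, hq⟩ => ⟨p.append q, fun y hy => by
    rw [Walk.support_append, List.mem_append] at hy
    rcases hy with hy | hy
    · exact hp y hy
    · exact hq y (List.mem_of_mem_tail hy)⟩

lemma ReachIn.cons {W : Set V} {a b c : V} (h : T.Adj a b) (ha : a ∈ W) :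
    ReachIn T W b c → ReachIn T W a c :=
  fun ⟨p, hp⟩ => ⟨Walk.cons h p, fun y hy => by
    rw [Walk.support_cons, List.mem_cons] at hy
    rcases hy with rfl | hy
    · exact ha
    · exact hp y hy⟩

lemma ReachIn.mem_left {W : Set V} {a b : V} (h : ReachIn T W a b) : a ∈ W := by
  obtain ⟨p, hp⟩ := h; exact hp a p.start_mem_support

lemma ReachIn.mem_right {W : Set V} {a b : V} (h : ReachIn T W a b) : b ∈ W := by
  obtain ⟨p, hp⟩ := h; exact hp b p.end_mem_support

lemma induceReach {S : Set V} :
    ∀ {x y : V} (p : T.Walk x y), (∀ z ∈ p.support, z ∈ S) →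
    ∀ (hx : x ∈ S) (hy : y ∈ S), (T.induce S).Reachable ⟨x, hx⟩ ⟨y, hy⟩ := by
  intro x y p
  induction p with
  | nil => intro _ hx hy; exact Reachable.refl _
  | @cons u b y h q ih =>
    intro hp hx hy
    have hb : b ∈ S := hp b (by simp [Walk.support_cons])
    have h1 : (T.induce S).Adj ⟨u, hx⟩ ⟨b, hb⟩ := h
    exact h1.reachable.trans (ih (fun z hz => hp z (by simp [Walk.support_cons, hz])) hb hy)

lemma connected_induce_of {S : Set V} {v : V} (hv : v ∈ S)
    (h : ∀ x ∈ S, ReachIn T S v x) : (T.induce S).Connected := by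
  rw [connected_iff]
  refine ⟨?_, ⟨⟨v, hv⟩⟩⟩
  rintro ⟨x, hx⟩ ⟨y, hy⟩
  obtain ⟨p, hp⟩ := (h x hx).symm.trans (h y hy)
  exact induceReach p hp hx hy

lemma reachIn_of_connected {S : Set V} (h : (T.induce S).Connected) {x y : V}
    (hx : x ∈ S) (hy : y ∈ S) : ReachIn T S x y := by
  obtain ⟨q⟩ := h.preconnected ⟨x, hx⟩ ⟨y, hy⟩
  refine ⟨q.map ⟨Subtype.val, fun {a b} hab => hab⟩, fun z hz => ?_⟩
  rw [Walk.support_map, List.mem_map] at hz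
  obtain ⟨⟨w, hw⟩, _, rfl⟩ := hz
  exact hw

/-- In a tree, if `v` is adjacent to two distinct vertices `c ≠ c'` and there is a
walk from `c` to `c'` avoiding `v`, contradiction. -/
lemma tree_no_detour (hT : T.IsTree) {W : Set V} {v c c' : V}
    (hvc : T.Adj v c) (hvc' : T.Adj v c') (hne : c ≠ c') (hvW : v ∉ W)
    (h : ReachIn T W c c') : False := by
  classical
  obtain ⟨p, hp⟩ := h
  have hvp : v ∉ p.support := fun hmem => hvW (hp v hmem)
  set q : T.Walk c c' := (p.toPath : T.Walk c c')
  have hq : q.IsPath := p.toPath.2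
  have hvq : v ∉ q.support := fun hmem => hvp (Walk.support_toPath_subset p hmem)
  have h1 : (Walk.cons hvc q).IsPath := (Walk.cons_isPath_iff hvc q).mpr ⟨hq, hvq⟩
  have h2 : (Walk.cons hvc' (Walk.nil)).IsPath := by
    rw [Walk.cons_isPath_iff]
    exact ⟨Walk.IsPath.nil, by simp [hvc'.ne]⟩
  obtain ⟨P, _, hPuniq⟩ := hT.existsUnique_path v c'
  have e1 := hPuniq _ h1
  have e2 := hPuniq _ h2
  have : Walk.cons hvc q = Walk.cons hvc' Walk.nil := e1.trans e2.symm
  have hlen := congrArg Walk.length this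
  simp only [Walk.length_cons, Walk.length_nil] at hlen
  have hq0 : q.length = 0 := by omega
  exact hne (Walk.eq_of_length_eq_zero hq0)


lemma ncard_biUnion_le {α β : Type*} [Finite β] (s : Finset α) (f : α → Set β) :
    (⋃ c ∈ s, f c).ncard ≤ ∑ c ∈ s, (f c).ncard := by
  classical
  induction s using Finset.induction with
  | empty => simp
  | @insert a s ha ih =>
    rw [Finset.set_biUnion_insert, Finset.sum_insert ha]
    exact le_trans (Set.ncard_union_le _ _) (by omega)

lemma le_ncard_biUnion {α β : Type*} [Finite β] (s : Finset α) (f : α → Set β)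
    (hdisj : ∀ a ∈ s, ∀ b ∈ s, a ≠ b → Disjoint (f a) (f b)) :
    ∑ c ∈ s, (f c).ncard ≤ (⋃ c ∈ s, f c).ncard := by
  classical
  induction s using Finset.induction with
  | empty => simp
  | @insert a s ha ih =>
    rw [Finset.set_biUnion_insert, Finset.sum_insert ha]
    have hd : Disjoint (f a) (⋃ c ∈ s, f c) := by
      rw [Set.disjoint_iUnion_right]
      intro i
      rw [Set.disjoint_iUnion_right]
      intro hi
      exact hdisj a (Finset.mem_insert_self a s) i (Finset.mem_insert_of_mem hi)
        (fun h => ha (h ▸ hi))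
    rw [Set.ncard_union_eq hd (Set.toFinite _) (Set.toFinite _)]
    have := ih (fun x hx y hy hxy =>
      hdisj x (Finset.mem_insert_of_mem hx) y (Finset.mem_insert_of_mem hy) hxy)
    omega


lemma arith_aux (e g s : ℕ) (he : e ≤ 1) : e + g * s ≤ (e + s) * (e + g) := by
  have h : (e + s) * (e + g) = e * e + e * g + s * e + s * g := by ring
  have h2 : g * s = s * g := Nat.mul_comm g s
  rcases Nat.le_one_iff_eq_zero_or_eq_one.mp he with rfl | rfl <;> rw [h, h2] <;> simp <;> omega

/-- A good subtree: induced-connected and with no two adjacent branching vertices. -/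
def Good (T : SimpleGraph V) (S : Set V) : Prop :=
  (T.induce S).Connected ∧
  ∀ u ∈ S, ∀ w ∈ S, T.Adj u w →
    ¬(3 ≤ ({x ∈ S | T.Adj u x}).ncard ∧ 3 ≤ ({x ∈ S | T.Adj w x}).ncard)

lemma key [Finite V] (hT : T.IsTree) :
    ∀ (n : ℕ) (A : Set V) (v : V), A.ncard ≤ n → v ∈ A → (T.induce A).Connected →
    ∀ L : Set V,
    ∃ S₁ S₂ : Set V,
      S₁ ⊆ A ∧ S₂ ⊆ A ∧ v ∈ S₁ ∧ v ∈ S₂ ∧ Good T S₁ ∧ Good T S₂ ∧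
      (∀ x ∈ S₁, T.Adj v x → ({w ∈ S₁ | T.Adj x w}).ncard ≤ 2) ∧
      ({w ∈ S₂ | T.Adj v w}).ncard ≤ 1 ∧
      (L ∩ A).ncard ≤ (L ∩ S₁).ncard * (L ∩ S₂).ncard := by
  classical
  intro n
  induction n with
  | zero =>
    intro A v hA hv _ _
    rw [Nat.le_zero, Set.ncard_eq_zero (Set.toFinite A)] at hA
    exact absurd (hA ▸ hv) (Set.notMem_empty v)
  | succ n ih =>
    intro A v hA hv hconn L
    set W : Set V := A \ {v} with hWdef
    have hvW : v ∉ W := fun h => h.2 rfl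
    set nb : Set V := {c | c ∈ W ∧ T.Adj v c} with hnbdef
    set B : V → Set V := fun c => {x | x ∈ W ∧ ReachIn T W c x} with hBdef
    have hBW : ∀ c, B c ⊆ W := fun c x hx => hx.1
    have hcB : ∀ c ∈ nb, c ∈ B c := fun c hc => ⟨hc.1, reachIn_refl hc.1⟩
    have hvB : ∀ c, v ∉ B c := fun c h => hvW (hBW c h)
    -- (F1) every vertex of W lies in some branch
    have F1 : ∀ x ∈ W, ∃ c ∈ nb, x ∈ B c := by
      intro x hx
      have hxA : x ∈ A := hx.1
      have hxv : x ≠ v := fun h => hx.2 h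
      obtain ⟨p0, hp0⟩ := reachIn_of_connected hconn hv hxA
      have hsupp : ∀ z ∈ (p0.toPath : T.Walk v x).support, z ∈ A :=
        fun z hz => hp0 z (Walk.support_toPath_subset p0 hz)
      have hpath : (p0.toPath : T.Walk v x).IsPath := p0.toPath.2
      cases hq : (p0.toPath : T.Walk v x) with
      | nil => exact absurd rfl hxv.symm
      | cons h r =>
        rename_i b
        rw [hq] at hsupp hpath
        rw [Walk.cons_isPath_iff] at hpath
        have hrW : ∀ z ∈ r.support, z ∈ W := by
          intro z hz
          refine ⟨hsupp z (by simp [Walk.support_cons, hz]), ?_⟩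
          intro hzv
          rw [Set.mem_singleton_iff] at hzv
          subst hzv
          exact hpath.2 hz
        have hbW : b ∈ W := hrW b r.start_mem_support
        exact ⟨b, ⟨hbW, h⟩, hrW x r.end_mem_support, ⟨r, hrW⟩⟩
    -- (F2) distinct branches are disjoint
    have F2 : ∀ c ∈ nb, ∀ c' ∈ nb, c ≠ c' → Disjoint (B c) (B c') := by
      intro c hc c' hc' hne
      rw [Set.disjoint_left]
      intro x hxc hxc'
      exact tree_no_detour hT hc.2 hc'.2 hne hvW (hxc.2.trans hxc'.2.symm)
    -- (F3) the only neighbour of v in B c is c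
    have F3 : ∀ c ∈ nb, ∀ x ∈ B c, T.Adj v x → x = c := by
      intro c hc x hx hadj
      by_contra hne
      exact tree_no_detour hT hc.2 hadj (Ne.symm hne) hvW hx.2
    -- (F4) no edges between distinct branches
    have F4 : ∀ c ∈ nb, ∀ c' ∈ nb, c ≠ c' → ∀ x ∈ B c, ∀ y ∈ B c', ¬ T.Adj x y := by
      intro c hc c' hc' hne x hx y hy hadj
      have hxy : ReachIn T W x y := ⟨Walk.cons hadj Walk.nil, by
        intro z hz
        simp only [Walk.support_cons, Walk.support_nil, List.mem_cons,
          List.mem_singleton] at hz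
        rcases hz with rfl | rfl | h
        · exact hx.1
        · exact hy.1
        · exact absurd h (List.not_mem_nil)⟩
      exact tree_no_detour hT hc.2 hc'.2 hne hvW (hx.2.trans (hxy.trans hy.2.symm))
    -- (F6) branches are connected
    have F6 : ∀ c ∈ nb, (T.induce (B c)).Connected := by
      intro c hc
      refine connected_induce_of (hcB c hc) ?_
      rintro x ⟨hxW, p, hp⟩
      refine ⟨p, fun z hz => ⟨hp z hz, ?_⟩⟩
      exact ⟨p.takeUntil z hz, fun w hw => hp w (Walk.support_takeUntil_subset p hz hw)⟩
    -- (F7) branches are small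
    have F7 : ∀ c ∈ nb, (B c).ncard ≤ n := by
      intro c hc
      have hss : B c ⊂ A := by
        constructor
        · exact fun x hx => (hBW c hx).1
        · intro hAB
          exact hvB c (hAB hv)
      have := Set.ncard_lt_ncard hss (Set.toFinite A)
      omega
    have hrec : ∀ c : V, ∃ S₁ S₂ : Set V, c ∈ nb →
        S₁ ⊆ B c ∧ S₂ ⊆ B c ∧ c ∈ S₁ ∧ c ∈ S₂ ∧ Good T S₁ ∧ Good T S₂ ∧
        (∀ x ∈ S₁, T.Adj c x → ({w ∈ S₁ | T.Adj x w}).ncard ≤ 2) ∧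
        ({w ∈ S₂ | T.Adj c w}).ncard ≤ 1 ∧
        (L ∩ B c).ncard ≤ (L ∩ S₁).ncard * (L ∩ S₂).ncard := by
      intro c
      by_cases hc : c ∈ nb
      · obtain ⟨S₁, S₂, hprops⟩ := ih (B c) c (F7 c hc) (hcB c hc) (F6 c hc) L
        exact ⟨S₁, S₂, fun _ => hprops⟩
      · exact ⟨∅, ∅, fun h => absurd h hc⟩
    choose S1 S2 hS using hrec
    set NB : Finset V := (Set.toFinite nb).toFinset with hNBdef
    have hNBmem : ∀ c, c ∈ NB ↔ c ∈ nb := fun c => Set.Finite.mem_toFinset _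
    by_cases hnbe : nb = ∅
    · -- A = {v}
      have hAv : A = {v} := by
        ext x
        constructor
        · intro hxA
          by_contra hxv
          have hxW : x ∈ W := ⟨hxA, hxv⟩
          obtain ⟨c, hc, _⟩ := F1 x hxW
          rw [hnbe] at hc
          exact hc
        · intro hx
          rw [Set.mem_singleton_iff] at hx
          subst hx
          exact hv
      have hgoodv : Good T ({v} : Set V) := by
        constructor
        · refine connected_induce_of (Set.mem_singleton v) ?_
          intro x hx
          rw [Set.mem_singleton_iff] at hx
          rw [hx]
          exact reachIn_refl (Set.mem_singleton v)
        · intro u hu w hw hadj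
          rw [Set.mem_singleton_iff] at hu hw
          rw [hu, hw] at hadj
          exact absurd hadj (T.loopless.irrefl v)
      refine ⟨{v}, {v}, by rw [hAv], by rw [hAv], Set.mem_singleton v, Set.mem_singleton v,
        hgoodv, hgoodv, ?_, ?_, ?_⟩
      · intro x hx hadj
        rw [Set.mem_singleton_iff] at hx
        rw [hx] at hadj
        exact absurd hadj (T.loopless.irrefl v)
      · calc ({w ∈ ({v} : Set V) | T.Adj v w}).ncard
            ≤ ({v} : Set V).ncard := Set.ncard_le_ncard (Set.sep_subset _ _) (Set.toFinite _)
          _ = 1 := Set.ncard_singleton v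
      · rw [hAv]
        rcases Nat.eq_zero_or_pos ((L ∩ {v}).ncard) with h | h
        · simp [h]
        · calc (L ∩ {v}).ncard = 1 * (L ∩ {v}).ncard := (one_mul _).symm
            _ ≤ (L ∩ {v}).ncard * (L ∩ {v}).ncard := Nat.mul_le_mul_right _ h
    · -- main case
      obtain ⟨c0, hc0⟩ := Set.nonempty_iff_ne_empty.mpr hnbe
      have hNBne : NB.Nonempty := ⟨c0, (hNBmem c0).mpr hc0⟩
      obtain ⟨cs, hcsNB, hmax⟩ := Finset.exists_max_image NB (fun c => (L ∩ S1 c).ncard) hNBne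
      have hcs : cs ∈ nb := (hNBmem cs).mp hcsNB
      have hS1sub : ∀ c ∈ nb, S1 c ⊆ B c := fun c hc => (hS c hc).1
      have hS2sub : ∀ c ∈ nb, S2 c ⊆ B c := fun c hc => (hS c hc).2.1
      have hcS1 : ∀ c ∈ nb, c ∈ S1 c := fun c hc => (hS c hc).2.2.1
      have hcS2 : ∀ c ∈ nb, c ∈ S2 c := fun c hc => (hS c hc).2.2.2.1
      have hgood1 : ∀ c ∈ nb, Good T (S1 c) := fun c hc => (hS c hc).2.2.2.2.1
      have hgood2 : ∀ c ∈ nb, Good T (S2 c) := fun c hc => (hS c hc).2.2.2.2.2.1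
      have hgp : ∀ c ∈ nb, ∀ x ∈ S1 c, T.Adj c x → ({w ∈ S1 c | T.Adj x w}).ncard ≤ 2 :=
        fun c hc => (hS c hc).2.2.2.2.2.2.1
      have hhp : ∀ c ∈ nb, ({w ∈ S2 c | T.Adj c w}).ncard ≤ 1 :=
        fun c hc => (hS c hc).2.2.2.2.2.2.2.1
      have hcnt : ∀ c ∈ nb, (L ∩ B c).ncard ≤ (L ∩ S1 c).ncard * (L ∩ S2 c).ncard :=
        fun c hc => (hS c hc).2.2.2.2.2.2.2.2
      set SS1 : Set V := insert v (⋃ c ∈ NB, S2 c) with hSS1def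
      set SS2 : Set V := insert v (S1 cs) with hSS2def
      have hvSS1 : v ∈ SS1 := Set.mem_insert _ _
      have hvSS2 : v ∈ SS2 := Set.mem_insert _ _
      have hS2SS1 : ∀ c ∈ nb, S2 c ⊆ SS1 := by
        intro c hc x hx
        exact Set.mem_insert_of_mem _ (Set.mem_iUnion₂.mpr ⟨c, (hNBmem c).mpr hc, hx⟩)
      have hSS1cases : ∀ x ∈ SS1, x = v ∨ ∃ c ∈ nb, x ∈ S2 c := by
        intro x hx
        rcases Set.mem_insert_iff.mp hx with h | h
        · exact Or.inl h
        · obtain ⟨c, hc, hxc⟩ := Set.mem_iUnion₂.mp h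
          exact Or.inr ⟨c, (hNBmem c).mp hc, hxc⟩
      -- uniqueness of the branch containing a vertex
      have huniq : ∀ c ∈ nb, ∀ c' ∈ nb, ∀ x, x ∈ B c → x ∈ B c' → c = c' := by
        intro c hc c' hc' x hx hx'
        by_contra hne
        exact (F2 c hc c' hc' hne).ne_of_mem hx hx' rfl
      -- subset facts
      have hsub1 : SS1 ⊆ A := by
        intro x hx
        rcases hSS1cases x hx with rfl | ⟨c, hc, hxc⟩
        · exact hv
        · exact (hBW c (hS2sub c hc hxc)).1
      have hsub2 : SS2 ⊆ A := by
        intro x hx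
        rcases Set.mem_insert_iff.mp hx with rfl | hx
        · exact hv
        · exact (hBW cs (hS1sub cs hcs hx)).1
      -- connectivity
      have conn1 : (T.induce SS1).Connected := by
        refine connected_induce_of hvSS1 ?_
        intro x hx
        rcases hSS1cases x hx with rfl | ⟨c, hc, hxc⟩
        · exact reachIn_refl hvSS1
        · exact ReachIn.cons hc.2 hvSS1
            ((reachIn_of_connected (hgood2 c hc).1 (hcS2 c hc) hxc).mono (hS2SS1 c hc))
      have conn2 : (T.induce SS2).Connected := by
        refine connected_induce_of hvSS2 ?_
        intro x hx
        rcases Set.mem_insert_iff.mp hx with rfl | hx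
        · exact reachIn_refl hvSS2
        · exact ReachIn.cons hcs.2 hvSS2
            ((reachIn_of_connected (hgood1 cs hcs).1 (hcS1 cs hcs) hx).mono
              (Set.subset_insert _ _))
      -- degree identities for SS1
      have D1 : ∀ c ∈ nb, {w ∈ SS1 | T.Adj c w} = insert v {w ∈ S2 c | T.Adj c w} := by
        intro c hc
        ext w
        constructor
        · rintro ⟨hwSS1, hadj⟩
          rcases hSS1cases w hwSS1 with rfl | ⟨c', hc', hwc'⟩
          · exact Set.mem_insert _ _
          · rcases eq_or_ne c' c with rfl | hne
            · exact Set.mem_insert_of_mem _ ⟨hwc', hadj⟩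
            · exact absurd hadj
                (F4 c hc c' hc' hne.symm c (hcB c hc) w (hS2sub c' hc' hwc'))
        · intro hw
          rcases Set.mem_insert_iff.mp hw with rfl | ⟨hw2, hadj⟩
          · exact ⟨hvSS1, hc.2.symm⟩
          · exact ⟨hS2SS1 c hc hw2, hadj⟩
      have D1card : ∀ c ∈ nb, ({w ∈ SS1 | T.Adj c w}).ncard ≤ 2 := by
        intro c hc
        rw [D1 c hc, Set.ncard_insert_of_notMem
          (fun h => hvB c (hS2sub c hc h.1)) (Set.toFinite _)]
        have := hhp c hc
        omega
      have D2 : ∀ c ∈ nb, ∀ u ∈ S2 c, u ≠ c →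
          {w ∈ SS1 | T.Adj u w} = {w ∈ S2 c | T.Adj u w} := by
        intro c hc u hu hne
        ext w
        constructor
        · rintro ⟨hwSS1, hadj⟩
          rcases hSS1cases w hwSS1 with rfl | ⟨c', hc', hwc'⟩
          · exact absurd (F3 c hc u (hS2sub c hc hu) hadj.symm) hne
          · rcases eq_or_ne c' c with rfl | hne'
            · exact ⟨hwc', hadj⟩
            · exact absurd hadj
                (F4 c hc c' hc' hne'.symm u (hS2sub c hc hu) w (hS2sub c' hc' hwc'))
        · rintro ⟨hw2, hadj⟩
          exact ⟨hS2SS1 c hc hw2, hadj⟩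
      -- goodness of SS1
      have good1 : Good T SS1 := by
        refine ⟨conn1, ?_⟩
        intro u hu w hw hadj
        rcases hSS1cases u hu with rfl | ⟨c, hc, huc⟩
        · -- u = v, so w is the root of its branch
          rcases hSS1cases w hw with rfl | ⟨c', hc', hwc'⟩
          · exact absurd hadj (T.loopless.irrefl _)
          · have hwc : w = c' := F3 c' hc' w (hS2sub c' hc' hwc') hadj
            subst hwc
            intro hcontra
            have := D1card w hc'
            omega
        · rcases hSS1cases w hw with rfl | ⟨c', hc', hwc'⟩
          · have huc' : u = c := F3 c hc u (hS2sub c hc huc) hadj.symm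
            subst huc'
            intro hcontra
            have := D1card u hc
            omega
          · have hcc : c = c' := by
              by_contra hne
              exact F4 c hc c' hc' hne u (hS2sub c hc huc) w (hS2sub c' hc' hwc') hadj
            subst hcc
            rcases eq_or_ne u c with rfl | hune
            · intro hcontra
              have := D1card u hc
              omega
            · rcases eq_or_ne w c with rfl | hwne
              · intro hcontra
                have := D1card w hc
                omega
              · rw [D2 c hc u huc hune, D2 c hc w hwc' hwne]
                exact (hgood2 c hc).2 u huc w hwc' hadj
      -- g-property of SS1
      have gp1 : ∀ x ∈ SS1, T.Adj v x → ({w ∈ SS1 | T.Adj x w}).ncard ≤ 2 := by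
        intro x hx hadj
        rcases hSS1cases x hx with rfl | ⟨c, hc, hxc⟩
        · exact absurd hadj (T.loopless.irrefl _)
        · have := F3 c hc x (hS2sub c hc hxc) hadj
          subst this
          exact D1card x hc
      -- degree facts for SS2
      have D3 : {w ∈ SS2 | T.Adj v w} ⊆ {cs} := by
        rintro w ⟨hwSS2, hadj⟩
        rcases Set.mem_insert_iff.mp hwSS2 with rfl | hw
        · exact absurd hadj (T.loopless.irrefl _)
        · rw [Set.mem_singleton_iff]
          exact F3 cs hcs w (hS1sub cs hcs hw) hadj
      have hp2 : ({w ∈ SS2 | T.Adj v w}).ncard ≤ 1 := by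
        calc ({w ∈ SS2 | T.Adj v w}).ncard ≤ ({cs} : Set V).ncard :=
              Set.ncard_le_ncard D3 (Set.toFinite _)
          _ = 1 := Set.ncard_singleton cs
      have D4 : ∀ u ∈ S1 cs, u ≠ cs →
          {w ∈ SS2 | T.Adj u w} = {w ∈ S1 cs | T.Adj u w} := by
        intro u hu hne
        ext w
        constructor
        · rintro ⟨hwSS2, hadj⟩
          rcases Set.mem_insert_iff.mp hwSS2 with rfl | hw
          · exact absurd (F3 cs hcs u (hS1sub cs hcs hu) hadj.symm) hne
          · exact ⟨hw, hadj⟩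
        · rintro ⟨hw, hadj⟩
          exact ⟨Set.mem_insert_of_mem _ hw, hadj⟩
      -- goodness of SS2
      have good2 : Good T SS2 := by
        refine ⟨conn2, ?_⟩
        intro u hu w hw hadj
        rcases Set.mem_insert_iff.mp hu with rfl | hu1
        · intro hcontra
          have := hp2
          omega
        · rcases Set.mem_insert_iff.mp hw with rfl | hw1
          · intro hcontra
            have := hp2
            omega
          · rcases eq_or_ne u cs with hucs | hune
            · have hwne : w ≠ cs := by
                intro hwcs
                rw [hucs, hwcs] at hadj
                exact T.loopless.irrefl cs hadj
              have h2 := hgp cs hcs w hw1 (hucs ▸ hadj)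
              rw [D4 w hw1 hwne]
              intro hcontra
              omega
            · rcases eq_or_ne w cs with hwcs | hwne
              · have h2 := hgp cs hcs u hu1 (hwcs ▸ hadj.symm)
                rw [D4 u hu1 hune]
                intro hcontra
                omega
              · rw [D4 u hu1 hune, D4 w hw1 hwne]
                exact (hgood1 cs hcs).2 u hu1 w hw1 hadj
      -- counting
      have he1 : (L ∩ {v}).ncard ≤ 1 := by
        calc (L ∩ {v}).ncard ≤ ({v} : Set V).ncard :=
              Set.ncard_le_ncard Set.inter_subset_right (Set.toFinite _)
          _ = 1 := Set.ncard_singleton v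
      have hq : (L ∩ SS2).ncard = (L ∩ {v}).ncard + (L ∩ S1 cs).ncard := by
        have hset : L ∩ SS2 = (L ∩ {v}) ∪ (L ∩ S1 cs) := by
          rw [hSS2def]
          ext x
          simp only [Set.mem_inter_iff, Set.mem_insert_iff, Set.mem_union,
            Set.mem_singleton_iff]
          tauto
        have hd : Disjoint (L ∩ {v}) (L ∩ S1 cs) := by
          rw [Set.disjoint_left]
          rintro x ⟨_, hx⟩ ⟨_, hx2⟩
          rw [Set.mem_singleton_iff] at hx
          exact hvB cs (hS1sub cs hcs (hx ▸ hx2))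
        rw [hset, Set.ncard_union_eq hd (Set.toFinite _) (Set.toFinite _)]
      have hp : (L ∩ {v}).ncard + ∑ c ∈ NB, (L ∩ S2 c).ncard ≤ (L ∩ SS1).ncard := by
        have hset : L ∩ SS1 = (L ∩ {v}) ∪ ⋃ c ∈ NB, (L ∩ S2 c) := by
          rw [hSS1def]
          ext x
          simp only [Set.mem_inter_iff, Set.mem_insert_iff, Set.mem_union,
            Set.mem_singleton_iff, Set.mem_iUnion, exists_prop]
          tauto
        have hd : Disjoint (L ∩ {v}) (⋃ c ∈ NB, (L ∩ S2 c)) := by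
          rw [Set.disjoint_left]
          rintro x ⟨_, hx⟩ hx2
          rw [Set.mem_singleton_iff] at hx
          obtain ⟨c, hc, _, hxc⟩ := Set.mem_iUnion₂.mp hx2
          exact hvB c (hS2sub c ((hNBmem c).mp hc) (hx ▸ hxc))
        rw [hset, Set.ncard_union_eq hd (Set.toFinite _) (Set.toFinite _)]
        refine Nat.add_le_add_left (le_ncard_biUnion NB _ ?_) _
        intro a ha b hb hab
        exact Disjoint.mono
          (Set.inter_subset_right.trans (hS2sub a ((hNBmem a).mp ha)))
          (Set.inter_subset_right.trans (hS2sub b ((hNBmem b).mp hb)))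
          (F2 a ((hNBmem a).mp ha) b ((hNBmem b).mp hb) hab)
      have hub : (L ∩ A).ncard ≤ (L ∩ {v}).ncard + ∑ c ∈ NB, (L ∩ B c).ncard := by
        have hsub : L ∩ A ⊆ (L ∩ {v}) ∪ ⋃ c ∈ NB, (L ∩ B c) := by
          rintro x ⟨hxL, hxA⟩
          rcases eq_or_ne x v with rfl | hxv
          · exact Set.mem_union_left _ ⟨hxL, Set.mem_singleton x⟩
          · obtain ⟨c, hc, hxc⟩ := F1 x ⟨hxA, hxv⟩
            exact Set.mem_union_right _ (Set.mem_iUnion₂.mpr ⟨c, (hNBmem c).mpr hc, hxL, hxc⟩)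
        calc (L ∩ A).ncard ≤ ((L ∩ {v}) ∪ ⋃ c ∈ NB, (L ∩ B c)).ncard :=
              Set.ncard_le_ncard hsub (Set.toFinite _)
          _ ≤ (L ∩ {v}).ncard + (⋃ c ∈ NB, (L ∩ B c)).ncard := Set.ncard_union_le _ _
          _ ≤ (L ∩ {v}).ncard + ∑ c ∈ NB, (L ∩ B c).ncard :=
              Nat.add_le_add_left (ncard_biUnion_le _ _) _
      have hchain : (L ∩ A).ncard ≤
          (L ∩ {v}).ncard + (L ∩ S1 cs).ncard * ∑ c ∈ NB, (L ∩ S2 c).ncard := by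
        have h1 : ∑ c ∈ NB, (L ∩ B c).ncard ≤
            ∑ c ∈ NB, (L ∩ S1 c).ncard * (L ∩ S2 c).ncard :=
          Finset.sum_le_sum (fun c hc => hcnt c ((hNBmem c).mp hc))
        have h2 : ∑ c ∈ NB, (L ∩ S1 c).ncard * (L ∩ S2 c).ncard ≤
            ∑ c ∈ NB, (L ∩ S1 cs).ncard * (L ∩ S2 c).ncard :=
          Finset.sum_le_sum (fun c hc => Nat.mul_le_mul_right _ (hmax c hc))
        rw [← Finset.mul_sum] at h2
        exact le_trans hub (Nat.add_le_add_left (le_trans h1 h2) _)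
      have hfinal : (L ∩ A).ncard ≤ (L ∩ SS1).ncard * (L ∩ SS2).ncard := by
        have hlow : ((L ∩ {v}).ncard + ∑ c ∈ NB, (L ∩ S2 c).ncard) *
            ((L ∩ {v}).ncard + (L ∩ S1 cs).ncard) ≤ (L ∩ SS1).ncard * (L ∩ SS2).ncard :=
          Nat.mul_le_mul hp (le_of_eq hq.symm)
        exact le_trans (le_trans hchain (arith_aux _ _ _ he1)) hlow
      exact ⟨SS1, SS2, hsub1, hsub2, hvSS1, hvSS2, good1, good2, gp1, hp2, hfinal⟩

end SubtreeAux

/-- **Lemma 3.5 (Esperet, de Joannis de Verclos).** Every tree with at least `ℓ`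
leaves has a subtree containing at least `√ℓ` of the leaves and having no two
adjacent branching vertices. -/
theorem subtree_many_leaves_no_adjacent_branching (V : Type) [Fintype V]
    (T : SimpleGraph V) (hT : T.IsTree) (ℓ : ℕ)
    (hl : ℓ ≤ {v | IsLeaf T v}.ncard) :
    ∃ S : Set V, (T.induce S).Connected ∧
      Real.sqrt ℓ ≤ (({v | IsLeaf T v} ∩ S).ncard : ℝ) ∧
      ∀ u ∈ S, ∀ v ∈ S, T.Adj u v →
        ¬(3 ≤ ({w ∈ S | T.Adj u w}).ncard ∧ 3 ≤ ({w ∈ S | T.Adj v w}).ncard) := by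
  classical
  obtain ⟨v₀⟩ : Nonempty V := hT.isConnected.nonempty
  have hconn : (T.induce (Set.univ : Set V)).Connected := by
    refine SubtreeAux.connected_induce_of (Set.mem_univ v₀) ?_
    intro x _
    obtain ⟨p⟩ := hT.isConnected.preconnected v₀ x
    exact ⟨p, fun y _ => Set.mem_univ y⟩
  obtain ⟨S₁, S₂, _, _, _, _, hg1, hg2, _, _, hcount⟩ :=
    SubtreeAux.key hT (Set.ncard (Set.univ : Set V)) Set.univ v₀ le_rfl (Set.mem_univ v₀)
      hconn {v | IsLeaf T v}
  rw [Set.inter_univ] at hcount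
  have hl2 : ℓ ≤ ({v | IsLeaf T v} ∩ S₁).ncard * ({v | IsLeaf T v} ∩ S₂).ncard :=
    le_trans hl hcount
  rcases le_total (({v | IsLeaf T v} ∩ S₁).ncard) (({v | IsLeaf T v} ∩ S₂).ncard) with
    hcmp | hcmp
  · refine ⟨S₂, hg2.1, ?_, hg2.2⟩
    have h2 : ℓ ≤ ({v | IsLeaf T v} ∩ S₂).ncard * ({v | IsLeaf T v} ∩ S₂).ncard :=
      le_trans hl2 (Nat.mul_le_mul_right _ hcmp)
    have h3 : (ℓ : ℝ) ≤ (({v | IsLeaf T v} ∩ S₂).ncard : ℝ) ^ 2 := by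
      rw [sq]; exact_mod_cast h2
    calc Real.sqrt ℓ ≤ Real.sqrt ((({v | IsLeaf T v} ∩ S₂).ncard : ℝ) ^ 2) :=
          Real.sqrt_le_sqrt h3
      _ = (({v | IsLeaf T v} ∩ S₂).ncard : ℝ) := Real.sqrt_sq (by positivity)
  · refine ⟨S₁, hg1.1, ?_, hg1.2⟩
    have h2 : ℓ ≤ ({v | IsLeaf T v} ∩ S₁).ncard * ({v | IsLeaf T v} ∩ S₁).ncard :=
      le_trans hl2 (Nat.mul_le_mul_left _ hcmp)
    have h3 : (ℓ : ℝ) ≤ (({v | IsLeaf T v} ∩ S₁).ncard : ℝ) ^ 2 := by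
      rw [sq]; exact_mod_cast h2
    calc Real.sqrt ℓ ≤ Real.sqrt ((({v | IsLeaf T v} ∩ S₁).ncard : ℝ) ^ 2) :=
          Real.sqrt_le_sqrt h3
      _ = (({v | IsLeaf T v} ∩ S₁).ncard : ℝ) := Real.sqrt_sq (by positivity)
end
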